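/- arXiv:1910.12646 — 12 statements merged into one kernel-verified Lean document; each statement's English description precedes it below -/
import Mathlib

section
/- Let α be a real number with α < 0. Then the cubic polynomial p(u) = u³ − u² − (α+1)u + 1 has exactly one real root, and this root lies in the open interval (−∞, 0). -/
/-- For `α < 0`, the cubic `p(u) = u³ − u² − (α+1)u + 1` has exactly one real root,
and this root lies in `(−∞, 0)`. -/
theorem stmt_0 (α : ℝ) (hα : α < 0) :
    (∃! u : ℝ, u ^ 3 - u ^ 2 - (α + 1) * u + 1 = 0) ∧
    (∀ u : ℝ, u ^ 3 - u ^ 2 - (α + 1) * u + 1 = 0 → u < 0) := by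
  have hneg : ∀ u : ℝ, u ^ 3 - u ^ 2 - (α + 1) * u + 1 = 0 → u < 0 := by
    intro u hu
    by_contra h
    push_neg at h
    rcases h.eq_or_lt with h0 | h0
    · rw [← h0] at hu; norm_num at hu
    · have h1 : α * u < 0 := mul_neg_of_neg_of_pos hα h0
      have h2 : 0 ≤ (u - 1) ^ 2 * (u + 1) :=
        mul_nonneg (sq_nonneg _) (by linarith)
      nlinarith
  -- existence via IVT
  have hex : ∃ u : ℝ, u ^ 3 - u ^ 2 - (α + 1) * u + 1 = 0 := by
    set f : ℝ → ℝ := fun u => u ^ 3 - u ^ 2 - (α + 1) * u + 1 with hf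
    have hc : ContinuousOn f (Set.Icc (-1 : ℝ) 0) := by
      apply Continuous.continuousOn; fun_prop
    have hsub := intermediate_value_Ioo (by norm_num : (-1 : ℝ) ≤ 0) hc
    have h0 : (0 : ℝ) ∈ Set.Ioo (f (-1)) (f 0) := by
      simp only [hf]
      constructor <;> norm_num
      linarith
    obtain ⟨u, _, hu⟩ := hsub h0
    exact ⟨u, hu⟩
  obtain ⟨u, hu⟩ := hex
  refine ⟨⟨u, hu, ?_⟩, hneg⟩
  intro v hv
  have hu0 := hneg u hu
  have hv0 := hneg v hv
  by_contra hne
  have key : (v - u) * (v * u * (v + u - 1) - 1) = 0 := by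
    linear_combination u * hv - v * hu
  have h2 : v * u * (v + u - 1) - 1 = 0 := by
    rcases mul_eq_zero.mp key with h | h
    · exact absurd (by linarith : v = u) hne
    · exact h
  nlinarith [mul_pos (neg_pos.2 hv0) (neg_pos.2 hu0)]
end

section
/- Let α be a real number with α > 0. Then the cubic polynomial p(u) = u³ − u² − (α+1)u + 1 has exactly three distinct real roots, and exactly one of them lies in each of the intervals (−∞, 0), (0, 1), and (1, ∞). -/
/-- If `a ≠ b` are both roots of the cubic, then a symmetric relation holds. -/
lemma pair_rel (α a b : ℝ) (hab : a ≠ b)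
    (ha : a ^ 3 - a ^ 2 - (α + 1) * a + 1 = 0)
    (hb : b ^ 3 - b ^ 2 - (α + 1) * b + 1 = 0) :
    a ^ 2 + a * b + b ^ 2 - (a + b) - (α + 1) = 0 := by
  have h : (a - b) * (a ^ 2 + a * b + b ^ 2 - (a + b) - (α + 1)) = 0 := by
    linear_combination ha - hb
  rcases mul_eq_zero.1 h with h' | h'
  · exact absurd (sub_eq_zero.1 h') hab
  · exact h'

/-- For `α > 0`, the cubic `p(u) = u³ − u² − (α+1)u + 1` has exactly three distinct
real roots, one in each of the intervals `(−∞,0)`, `(0,1)` and `(1,∞)`. -/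
theorem stmt_1 (α : ℝ) (hα : 0 < α) :
    ∃ u₁ u₂ u₃ : ℝ,
      u₁ < 0 ∧ 0 < u₂ ∧ u₂ < 1 ∧ 1 < u₃ ∧
      u₁ ^ 3 - u₁ ^ 2 - (α + 1) * u₁ + 1 = 0 ∧
      u₂ ^ 3 - u₂ ^ 2 - (α + 1) * u₂ + 1 = 0 ∧
      u₃ ^ 3 - u₃ ^ 2 - (α + 1) * u₃ + 1 = 0 ∧
      (∀ u : ℝ, u ^ 3 - u ^ 2 - (α + 1) * u + 1 = 0 → u = u₁ ∨ u = u₂ ∨ u = u₃) := by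
  set f : ℝ → ℝ := fun u => u ^ 3 - u ^ 2 - (α + 1) * u + 1 with hf
  have hcont : Continuous f := by fun_prop
  have hf0 : f 0 = 1 := by simp [hf]
  have hf1 : f 1 = -α := by simp only [hf]; ring
  have hfneg : f (-(α + 2)) < 0 := by
    simp only [hf]; nlinarith [sq_nonneg α, sq_nonneg (α + 2)]
  have hfpos : 0 < f (α + 2) := by
    simp only [hf]; nlinarith [sq_nonneg α, sq_nonneg (α + 2)]
  -- root in (-(α+2), 0)
  obtain ⟨u₁, hu₁m, hu₁⟩ : ∃ x ∈ Set.Ioo (-(α + 2) : ℝ) 0, f x = 0 := by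
    have := intermediate_value_Ioo (a := -(α + 2)) (b := 0) (by linarith) hcont.continuousOn
    have h0 : (0 : ℝ) ∈ Set.Ioo (f (-(α + 2))) (f 0) := by
      exact ⟨hfneg, by rw [hf0]; norm_num⟩
    obtain ⟨x, hx, hfx⟩ := this h0
    exact ⟨x, hx, hfx⟩
  obtain ⟨u₂, hu₂m, hu₂⟩ : ∃ x ∈ Set.Ioo (0 : ℝ) 1, f x = 0 := by
    have := intermediate_value_Ioo' (a := (0 : ℝ)) (b := 1) (by norm_num) hcont.continuousOn
    have h0 : (0 : ℝ) ∈ Set.Ioo (f 1) (f 0) := by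
      constructor <;> simp [hf0, hf1] <;> linarith
    obtain ⟨x, hx, hfx⟩ := this h0
    exact ⟨x, hx, hfx⟩
  obtain ⟨u₃, hu₃m, hu₃⟩ : ∃ x ∈ Set.Ioo (1 : ℝ) (α + 2), f x = 0 := by
    have := intermediate_value_Ioo (a := (1 : ℝ)) (b := α + 2) (by linarith) hcont.continuousOn
    have h0 : (0 : ℝ) ∈ Set.Ioo (f 1) (f (α + 2)) := by
      constructor
      · simp [hf1]; linarith
      · exact hfpos
    obtain ⟨x, hx, hfx⟩ := this h0
    exact ⟨x, hx, hfx⟩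
  have h1 : u₁ < 0 := hu₁m.2
  have h2 : 0 < u₂ := hu₂m.1
  have h2' : u₂ < 1 := hu₂m.2
  have h3 : 1 < u₃ := hu₃m.1
  have p₁ : u₁ ^ 3 - u₁ ^ 2 - (α + 1) * u₁ + 1 = 0 := hu₁
  have p₂ : u₂ ^ 3 - u₂ ^ 2 - (α + 1) * u₂ + 1 = 0 := hu₂
  have p₃ : u₃ ^ 3 - u₃ ^ 2 - (α + 1) * u₃ + 1 = 0 := hu₃
  have ne12 : u₁ ≠ u₂ := by linarith
  have ne13 : u₁ ≠ u₃ := by linarith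
  have ne23 : u₂ ≠ u₃ := by linarith
  have q12 := pair_rel α u₁ u₂ ne12 p₁ p₂
  have q13 := pair_rel α u₁ u₃ ne13 p₁ p₃
  -- Vieta
  have he1 : u₁ + u₂ + u₃ = 1 := by
    have h : (u₂ - u₃) * (u₁ + u₂ + u₃ - 1) = 0 := by linear_combination q12 - q13
    rcases mul_eq_zero.1 h with h' | h'
    · exact absurd (sub_eq_zero.1 h') ne23
    · linarith [h']
  have he2 : u₁ * u₂ + u₁ * u₃ + u₂ * u₃ = -(α + 1) := by
    nlinarith [q12, he1]
  have he3 : u₁ * u₂ * u₃ = -1 := by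
    nlinarith [p₁, he1, he2]
  refine ⟨u₁, u₂, u₃, h1, h2, h2', h3, p₁, p₂, p₃, ?_⟩
  intro u hu
  have key : (u - u₁) * (u - u₂) * (u - u₃) = 0 := by
    linear_combination hu - u ^ 2 * he1 + u * he2 - he3
  rcases mul_eq_zero.1 key with h | h
  · rcases mul_eq_zero.1 h with h' | h'
    · exact Or.inl (sub_eq_zero.1 h')
    · exact Or.inr (Or.inl (sub_eq_zero.1 h'))
  · exact Or.inr (Or.inr (sub_eq_zero.1 h))
end

section
/- Let Γ0, Γ1 be real numbers with Γ0 ≠ 0, and let (u,v): ℝ → ℝ² be a global solution of the system (u',v') = F(u,v) avoiding the points (0,0) and (1,0). Then for every t ∈ ℝ, the derivative of the function t ↦ u(t)² + v(t)² equals −Γ1·v(t) / (π·((u(t)−1)² + v(t)²)). -/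
/-- Along any global solution, the derivative of `t ↦ u(t)² + v(t)²` equals
`−Γ1·v(t) / (π·((u(t)−1)² + v(t)²))`. -/
theorem stmt_5 (Γ₀ Γ₁ : ℝ) (hΓ₀ : Γ₀ ≠ 0) (u v : ℝ → ℝ)
    (havoid : ∀ t : ℝ, (u t, v t) ≠ ((0 : ℝ), (0 : ℝ)) ∧ (u t, v t) ≠ ((1 : ℝ), (0 : ℝ)))
    (hu : ∀ t : ℝ, HasDerivAt u
      ((Γ₀ / (2 * Real.pi)) * v t
        - (Γ₁ / (2 * Real.pi)) * (v t / ((u t - 1) ^ 2 + v t ^ 2))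
        - (Γ₀ / (2 * Real.pi)) * (v t / (u t ^ 2 + v t ^ 2))) t)
    (hv : ∀ t : ℝ, HasDerivAt v
      (-((Γ₀ / (2 * Real.pi)) * u t)
        + (Γ₁ / (2 * Real.pi)) * ((u t - 1) / ((u t - 1) ^ 2 + v t ^ 2))
        + (Γ₀ / (2 * Real.pi)) * (u t / (u t ^ 2 + v t ^ 2))) t) :
    ∀ t : ℝ, HasDerivAt (fun s : ℝ => u s ^ 2 + v s ^ 2)
      (-Γ₁ * v t / (Real.pi * ((u t - 1) ^ 2 + v t ^ 2))) t := by
  intro t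
  have h1 : (u t - 1) ^ 2 + v t ^ 2 ≠ 0 := by
    intro h
    have h2 : u t - 1 = 0 ∧ v t = 0 := by
      constructor <;> nlinarith [sq_nonneg (u t - 1), sq_nonneg (v t), sq_abs (u t - 1), abs_nonneg (u t - 1), sq_abs (v t)]
    exact (havoid t).2 (by simp [Prod.ext_iff]; constructor <;> linarith [h2.1, h2.2])
  have h0 : u t ^ 2 + v t ^ 2 ≠ 0 := by
    intro h
    have h2 : u t = 0 ∧ v t = 0 := by
      constructor <;> nlinarith [sq_nonneg (u t), sq_nonneg (v t)]
    exact (havoid t).1 (by simp [Prod.ext_iff, h2.1, h2.2])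
  have hπ : Real.pi ≠ 0 := Real.pi_ne_zero
  have h := ((hu t).pow 2).add ((hv t).pow 2)
  refine HasDerivAt.congr_deriv h ?_
  field_simp
  ring
end

section
/- Let Γ0, Γ1 be real numbers with Γ0 ≠ 0, and let (u,v): ℝ → ℝ² be a global solution of the system (u',v') = F(u,v) avoiding the points (0,0) and (1,0). Then for every t ∈ ℝ, the derivative of the function t ↦ (u(t)−1)² + v(t)² equals −Γ0·v(t)·(u(t)² + v(t)² − 1) / (π·(u(t)² + v(t)²)). -/
/-- Along any global solution, the derivative of `t ↦ (u(t)−1)² + v(t)²` equals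
`−Γ0·v(t)·(u(t)² + v(t)² − 1) / (π·(u(t)² + v(t)²))`. -/
theorem stmt_6 (Γ₀ Γ₁ : ℝ) (hΓ₀ : Γ₀ ≠ 0) (u v : ℝ → ℝ)
    (havoid : ∀ t : ℝ, (u t, v t) ≠ ((0 : ℝ), (0 : ℝ)) ∧ (u t, v t) ≠ ((1 : ℝ), (0 : ℝ)))
    (hu : ∀ t : ℝ, HasDerivAt u
      ((Γ₀ / (2 * Real.pi)) * v t
        - (Γ₁ / (2 * Real.pi)) * (v t / ((u t - 1) ^ 2 + v t ^ 2))
        - (Γ₀ / (2 * Real.pi)) * (v t / (u t ^ 2 + v t ^ 2))) t)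
    (hv : ∀ t : ℝ, HasDerivAt v
      (-((Γ₀ / (2 * Real.pi)) * u t)
        + (Γ₁ / (2 * Real.pi)) * ((u t - 1) / ((u t - 1) ^ 2 + v t ^ 2))
        + (Γ₀ / (2 * Real.pi)) * (u t / (u t ^ 2 + v t ^ 2))) t) :
    ∀ t : ℝ, HasDerivAt (fun s : ℝ => (u s - 1) ^ 2 + v s ^ 2)
      (-Γ₀ * v t * (u t ^ 2 + v t ^ 2 - 1) / (Real.pi * (u t ^ 2 + v t ^ 2))) t := by
  intro t
  have hπ : Real.pi ≠ 0 := Real.pi_ne_zero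
  have hA : (u t - 1) ^ 2 + v t ^ 2 ≠ 0 := by
    intro h
    have h1 : u t - 1 = 0 ∧ v t = 0 := by
      constructor <;> nlinarith [sq_nonneg (u t - 1), sq_nonneg (v t)]
    exact (havoid t).2 (by simp [Prod.ext_iff, sub_eq_zero.mp h1.1, h1.2])
  have hB : u t ^ 2 + v t ^ 2 ≠ 0 := by
    intro h
    have h1 : u t = 0 ∧ v t = 0 := by
      constructor <;> nlinarith [sq_nonneg (u t), sq_nonneg (v t)]
    exact (havoid t).1 (by simp [Prod.ext_iff, h1.1, h1.2])
  have h : HasDerivAt (fun s : ℝ => (u s - 1) ^ 2 + v s ^ 2) _ t :=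
    (((hu t).sub_const 1).pow 2).add ((hv t).pow 2)
  convert h using 1
  field_simp
  ring
end

section
/- Let Γ0, Γ1 be real numbers with Γ0 ≠ 0, set ω = Γ0/(2π), and let c ∈ ℝ. Then the level set { (u,v) ∈ ℝ² \ {(0,0),(1,0)} : H(u,v) = c } of the Hamiltonian H(u,v) = −(ω/2)(u²+v²) + (Γ1/(4π))·log((u−1)²+v²) + (Γ0/(4π))·log(u²+v²) is a bounded subset of ℝ². -/
/-- Every level set of the Hamiltonian
`H(u,v) = −(ω/2)(u²+v²) + (Γ1/(4π))log((u−1)²+v²) + (Γ0/(4π))log(u²+v²)`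
(with `ω = Γ0/(2π)`, on `ℝ² \ {(0,0),(1,0)}`) is a bounded subset of `ℝ²`. -/
theorem stmt_7 (Γ₀ Γ₁ : ℝ) (hΓ₀ : Γ₀ ≠ 0) (c : ℝ) :
    Bornology.IsBounded {p : ℝ × ℝ |
      p ≠ ((0 : ℝ), (0 : ℝ)) ∧ p ≠ ((1 : ℝ), (0 : ℝ)) ∧
      -(Γ₀ / (2 * Real.pi) / 2) * (p.1 ^ 2 + p.2 ^ 2)
        + (Γ₁ / (4 * Real.pi)) * Real.log ((p.1 - 1) ^ 2 + p.2 ^ 2)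
        + (Γ₀ / (4 * Real.pi)) * Real.log (p.1 ^ 2 + p.2 ^ 2) = c} := by
  have hπ : (0:ℝ) < Real.pi := Real.pi_pos
  set A := |Γ₀| with hAdef
  have hA : 0 < A := abs_pos.mpr hΓ₀
  set K := |Γ₁| with hKdef
  have hK : 0 ≤ K := abs_nonneg _
  set M := max 1 (8*K/A) with hMdef
  have hM1 : (1:ℝ) ≤ M := le_max_left _ _
  have hMpos : (0:ℝ) < M := lt_of_lt_of_le one_pos hM1
  have hKM : 8*K ≤ A*M := by
    have h := le_max_right 1 (8*K/A)
    have : A * (8*K/A) = 8*K := by field_simp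
    nlinarith
  set L := Real.log M with hLdef
  have hL : 0 ≤ L := Real.log_nonneg hM1
  set D := |4*Real.pi*c| with hDdef
  have hD : 0 ≤ D := abs_nonneg _
  set B := max 4 ((4*D + A + 4*K*L)/A) with hBdef
  have hB4 : (4:ℝ) ≤ B := le_max_left _ _
  have hBr : (4*D + A + 4*K*L)/A ≤ B := le_max_right _ _
  clear_value L D B
  clear_value A K M
  rw [Metric.isBounded_iff_subset_closedBall (0:ℝ×ℝ)]
  refine ⟨Real.sqrt B, fun p hp => ?_⟩
  obtain ⟨hp0, hp1, heq⟩ := hp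
  set t := p.1^2 + p.2^2 with ht
  set s := (p.1-1)^2 + p.2^2 with hs
  clear_value t s
  have htB : t ≤ B := by
    by_cases h4 : t ≤ 4
    · linarith
    push_neg at h4
    have ht0 : (0:ℝ) < t := by linarith
    have hs1 : (1:ℝ) ≤ s := by nlinarith [sq_nonneg (p.1 - 2), sq_nonneg p.2]
    have hs0 : (0:ℝ) < s := by linarith
    have hs2 : s ≤ 2*t+2 := by nlinarith [sq_nonneg (p.1 + 1)]
    -- log t ≤ t/2
    have hsqrt : Real.sqrt t ≤ t/4 + 1 := by
      nlinarith [Real.sq_sqrt ht0.le, Real.sqrt_nonneg t, sq_nonneg (Real.sqrt t - 2)]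
    have hlog_sqrt : Real.log (Real.sqrt t) ≤ Real.sqrt t - 1 :=
      Real.log_le_sub_one_of_pos (Real.sqrt_pos.mpr ht0)
    have hlogt : Real.log t ≤ t/2 := by
      have h := Real.log_sqrt ht0.le
      linarith [hlog_sqrt, hsqrt, h.symm ▸ hlog_sqrt]
    have hlogs0 : 0 ≤ Real.log s := Real.log_nonneg hs1
    have hlogsM : Real.log s ≤ s/M + L := by
      have h1 : Real.log (s/M) ≤ s/M - 1 :=
        Real.log_le_sub_one_of_pos (div_pos hs0 hMpos)
      have h2 : Real.log (s/M) = Real.log s - Real.log M :=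
        Real.log_div (ne_of_gt hs0) (ne_of_gt hMpos)
      rw [h2] at h1
      simp only [hLdef]
      linarith
    -- main equation multiplied by 4π
    have hmain : Γ₀*(Real.log t - t) + Γ₁ * Real.log s = 4*Real.pi*c := by
      have hx : Γ₀*(Real.log t - t) + Γ₁ * Real.log s
          = 4*Real.pi * (-(Γ₀ / (2 * Real.pi) / 2) * t
            + (Γ₁ / (4 * Real.pi)) * Real.log s + (Γ₀ / (4 * Real.pi)) * Real.log t) := by
        field_simp
        ring
      rw [hx, heq]
    -- abs bound
    have habs : A*(t - Real.log t) ≤ D + K*Real.log s := by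
      have h1 : |Γ₀*(Real.log t - t)| ≤ |Γ₀*(Real.log t - t) + Γ₁*Real.log s| + |Γ₁*Real.log s| := by
        have := abs_sub_abs_le_abs_sub (Γ₀*(Real.log t - t)) (-(Γ₁*Real.log s))
        simp only [sub_neg_eq_add, abs_neg] at this
        linarith
      rw [hmain] at h1
      have h2 : |Γ₀*(Real.log t - t)| = A*(t - Real.log t) := by
        rw [abs_mul, abs_of_nonpos (by linarith : Real.log t - t ≤ 0), hAdef]
        ring
      have h3 : |Γ₁*Real.log s| = K*Real.log s := by
        rw [abs_mul, abs_of_nonneg hlogs0, hKdef]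
      rw [h2, h3] at h1
      exact hDdef ▸ h1
    -- combine
    have hKsM : K*(s/M) ≤ A*s/8 := by
      rw [← mul_div_assoc, div_le_div_iff₀ hMpos (by norm_num : (0:ℝ) < 8)]
      linarith [mul_le_mul_of_nonneg_right hKM hs0.le]
    have h5 : A*(t/2) ≤ A*(t - Real.log t) :=
      mul_le_mul_of_nonneg_left (by linarith) hA.le
    have h6 : K*Real.log s ≤ K*(s/M + L) := mul_le_mul_of_nonneg_left hlogsM hK
    have h7 : A*s ≤ A*(2*t+2) := mul_le_mul_of_nonneg_left hs2 hA.le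
    have hAt : A*t ≤ 4*D + A + 4*K*L := by linarith [h5, h6, h7, hKsM, habs]
    have : t ≤ (4*D + A + 4*K*L)/A := by
      rw [le_div_iff₀ hA]; linarith
    linarith
  -- conclude norm bound
  have hnorm : ‖p‖^2 ≤ t := by
    rw [Prod.norm_def]
    rcases max_cases ‖p.1‖ ‖p.2‖ with ⟨h, _⟩ | ⟨h, _⟩ <;> rw [h] <;>
      simp only [Real.norm_eq_abs, sq_abs] <;> linarith [ht, sq_nonneg p.1, sq_nonneg p.2]
  have : ‖p‖ ≤ Real.sqrt B := by
    exact (Real.le_sqrt (norm_nonneg p) (by linarith)).mpr (le_trans hnorm htB)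
  simpa [Metric.mem_closedBall, dist_zero_right] using this
end

section
/- Let Γ0, Γ1 be real numbers with Γ0 ≠ 0 and Γ1 ≠ 0, and let (u,v): ℝ → ℝ² be a global solution of the system (u',v') = F(u,v) avoiding the points (0,0) and (1,0). Then the two functions t ↦ u(t)² + v(t)² and t ↦ (u(t)−1)² + v(t)² are both constant on ℝ if and only if the curve (u,v) is a constant function (that is, an equilibrium solution of the system). -/
/-- A global solution has both squared inter-vortex distances `u²+v²` and `(u−1)²+v²`
constant if and only if it is a constant (equilibrium) solution. -/
theorem stmt_9 (Γ₀ Γ₁ : ℝ) (hΓ₀ : Γ₀ ≠ 0) (hΓ₁ : Γ₁ ≠ 0) (u v : ℝ → ℝ)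
    (havoid : ∀ t : ℝ, (u t, v t) ≠ ((0 : ℝ), (0 : ℝ)) ∧ (u t, v t) ≠ ((1 : ℝ), (0 : ℝ)))
    (hu : ∀ t : ℝ, HasDerivAt u
      ((Γ₀ / (2 * Real.pi)) * v t
        - (Γ₁ / (2 * Real.pi)) * (v t / ((u t - 1) ^ 2 + v t ^ 2))
        - (Γ₀ / (2 * Real.pi)) * (v t / (u t ^ 2 + v t ^ 2))) t)
    (hv : ∀ t : ℝ, HasDerivAt v
      (-((Γ₀ / (2 * Real.pi)) * u t)
        + (Γ₁ / (2 * Real.pi)) * ((u t - 1) / ((u t - 1) ^ 2 + v t ^ 2))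
        + (Γ₀ / (2 * Real.pi)) * (u t / (u t ^ 2 + v t ^ 2))) t) :
    ((∀ s t : ℝ, u s ^ 2 + v s ^ 2 = u t ^ 2 + v t ^ 2) ∧
     (∀ s t : ℝ, (u s - 1) ^ 2 + v s ^ 2 = (u t - 1) ^ 2 + v t ^ 2))
    ↔ (∀ s t : ℝ, (u s, v s) = (u t, v t)) := by
  have hπ : Real.pi ≠ 0 := Real.pi_ne_zero
  constructor
  · rintro ⟨h0, -⟩
    have hv0 : ∀ t, v t = 0 := by
      intro t
      have hR1 : (u t - 1) ^ 2 + v t ^ 2 ≠ 0 := by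
        intro h
        apply (havoid t).2
        have h1 : u t - 1 = 0 := by nlinarith [sq_nonneg (u t - 1), sq_nonneg (v t)]
        have h2 : v t = 0 := by nlinarith [sq_nonneg (u t - 1), sq_nonneg (v t)]
        simp only [Prod.mk.injEq]
        constructor <;> linarith
      have hR0 : u t ^ 2 + v t ^ 2 ≠ 0 := by
        intro h
        apply (havoid t).1
        have h1 : u t = 0 := by nlinarith [sq_nonneg (u t), sq_nonneg (v t)]
        have h2 : v t = 0 := by nlinarith [sq_nonneg (u t), sq_nonneg (v t)]
        simp [h1, h2]
      have hg := ((hu t).pow 2).add ((hv t).pow 2)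
      have hc : HasDerivAt (fun s => u s ^ 2 + v s ^ 2) 0 t := by
        have heq : (fun s => u s ^ 2 + v s ^ 2) = fun _ => u t ^ 2 + v t ^ 2 :=
          funext fun s => h0 s t
        rw [heq]; exact hasDerivAt_const _ _
      have hzero := hc.unique hg
      have hkey : Γ₁ * v t * (8 * Real.pi ^ 2 * (u t ^ 2 + v t ^ 2)) = 0 := by
        field_simp at hzero
        linear_combination (4 * Real.pi ^ 2) * hzero
      have hpos : (8 : ℝ) * Real.pi ^ 2 * (u t ^ 2 + v t ^ 2) ≠ 0 := by
        have h0' : 0 ≤ u t ^ 2 + v t ^ 2 := by positivity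
        have : 0 < u t ^ 2 + v t ^ 2 := lt_of_le_of_ne h0' (Ne.symm hR0)
        positivity
      have := (mul_eq_zero.mp hkey).resolve_right hpos
      exact (mul_eq_zero.mp this).resolve_left hΓ₁
    have hu0 : ∀ t, HasDerivAt u 0 t := by
      intro t
      have := hu t
      simpa [hv0 t] using this
    have hucst : ∀ s t : ℝ, u s = u t := by
      intro s t
      have hdiff : Differentiable ℝ u := fun x => (hu0 x).differentiableAt
      have hderiv : ∀ x, deriv u x = 0 := fun x => (hu0 x).deriv
      exact is_const_of_deriv_eq_zero hdiff hderiv s t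
    intro s t
    simp [hucst s t, hv0 s, hv0 t]
  · intro h
    constructor <;> intro s t <;>
      · have := h s t
        simp only [Prod.mk.injEq] at this
        rw [this.1, this.2]
end

section
/- Let Γ0, Γ1 be real numbers with Γ0 ≠ 0 and Γ1 ≠ 0, and let (u,v): ℝ → ℝ² be a global solution of the system (u',v') = F(u,v) avoiding the points (0,0) and (1,0). Suppose there exists δ > 0 such that for all t ∈ ℝ and every point (u*,v*) ∈ ℝ² \ {(0,0),(1,0)} with F(u*,v*) = (0,0), the distance from (u(t),v(t)) to (u*,v*) is at least δ. Then the solution is periodic: there exists T > 0 such that (u(t+T), v(t+T)) = (u(t), v(t)) for all t ∈ ℝ. -/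
open Set Filter Metric Real

namespace Stmt10

/-- squared distance to the origin -/
noncomputable def q0 (p : ℝ × ℝ) : ℝ := p.1 ^ 2 + p.2 ^ 2
/-- squared distance to (1,0) -/
noncomputable def q1 (p : ℝ × ℝ) : ℝ := (p.1 - 1) ^ 2 + p.2 ^ 2

/-- the vector field -/
noncomputable def Fv (a b : ℝ) (p : ℝ × ℝ) : ℝ × ℝ :=
  (a * p.2 - b * (p.2 / q1 p) - a * (p.2 / q0 p),
   -(a * p.1) + b * ((p.1 - 1) / q1 p) + a * (p.1 / q0 p))

/-- the Hamiltonian -/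
noncomputable def Hf (a b : ℝ) (p : ℝ × ℝ) : ℝ :=
  a / 2 * q0 p - b / 2 * Real.log (q1 p) - a / 2 * Real.log (q0 p)

/-- partial derivative of Hf in the first variable -/
noncomputable def HU (a b : ℝ) (p : ℝ × ℝ) : ℝ :=
  a * p.1 - b * ((p.1 - 1) / q1 p) - a * (p.1 / q0 p)
/-- partial derivative of Hf in the second variable -/
noncomputable def HV (a b : ℝ) (p : ℝ × ℝ) : ℝ :=
  a * p.2 - b * (p.2 / q1 p) - a * (p.2 / q0 p)

lemma Fv_eq (a b : ℝ) (p : ℝ × ℝ) : Fv a b p = (HV a b p, -HU a b p) := by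
  simp [Fv, HU, HV]; ring

lemma q0_nonneg (p : ℝ × ℝ) : 0 ≤ q0 p := by unfold q0; positivity
lemma q1_nonneg (p : ℝ × ℝ) : 0 ≤ q1 p := by unfold q1; positivity

/-- chain rule for Hf along a curve -/
lemma hasDerivAt_Hf (a b : ℝ) {f g : ℝ → ℝ} {f' g' t : ℝ}
    (hf : HasDerivAt f f' t) (hg : HasDerivAt g g' t)
    (h0 : q0 (f t, g t) ≠ 0) (h1 : q1 (f t, g t) ≠ 0) :
    HasDerivAt (fun s => Hf a b (f s, g s))
      (HU a b (f t, g t) * f' + HV a b (f t, g t) * g') t := by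
  have h2 : HasDerivAt (fun s => (f s) ^ 2 + (g s) ^ 2)
      (2 * f t * f' + 2 * g t * g') t := by
    have := ((hf.pow 2).add (hg.pow 2))
    exact this.congr_deriv (by norm_num)
  have h3 : HasDerivAt (fun s => (f s - 1) ^ 2 + (g s) ^ 2)
      (2 * (f t - 1) * f' + 2 * g t * g') t := by
    have := (((hf.sub_const 1).pow 2).add (hg.pow 2))
    exact this.congr_deriv (by norm_num)
  have h4 : HasDerivAt (fun s => Real.log ((f s) ^ 2 + (g s) ^ 2))
      (((f t) ^ 2 + (g t) ^ 2)⁻¹ * (2 * f t * f' + 2 * g t * g')) t :=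
    by have := (Real.hasDerivAt_log (x := (f t) ^ 2 + (g t) ^ 2) h0).comp t h2; exact this
  have h5 : HasDerivAt (fun s => Real.log ((f s - 1) ^ 2 + (g s) ^ 2))
      (((f t - 1) ^ 2 + (g t) ^ 2)⁻¹ * (2 * (f t - 1) * f' + 2 * g t * g')) t :=
    by have := (Real.hasDerivAt_log (x := (f t - 1) ^ 2 + (g t) ^ 2) h1).comp t h3; exact this
  have h6 := ((h2.const_mul (a / 2)).sub (h5.const_mul (b / 2))).sub (h4.const_mul (a / 2))
  have heq : (fun s => Hf a b (f s, g s)) =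
      fun s => a / 2 * ((f s) ^ 2 + (g s) ^ 2)
        - b / 2 * Real.log ((f s - 1) ^ 2 + (g s) ^ 2)
        - a / 2 * Real.log ((f s) ^ 2 + (g s) ^ 2) := by
    funext s; rfl
  rw [heq]
  refine h6.congr_deriv ?_
  simp only [HU, HV, q0, q1] at *
  field_simp
  ring

/-- directional derivative of Hf along a straight line -/
lemma hasDerivAt_Hf_line (a b : ℝ) (q n : ℝ × ℝ) (s : ℝ)
    (h0 : q0 (q.1 + s * n.1, q.2 + s * n.2) ≠ 0)
    (h1 : q1 (q.1 + s * n.1, q.2 + s * n.2) ≠ 0) :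
    HasDerivAt (fun s => Hf a b (q.1 + s * n.1, q.2 + s * n.2))
      (HU a b (q.1 + s * n.1, q.2 + s * n.2) * n.1
        + HV a b (q.1 + s * n.1, q.2 + s * n.2) * n.2) s := by
  have hf : HasDerivAt (fun s : ℝ => q.1 + s * n.1) n.1 s := by
    simpa using ((hasDerivAt_id s).mul_const n.1).const_add q.1
  have hg : HasDerivAt (fun s : ℝ => q.2 + s * n.2) n.2 s := by
    simpa using ((hasDerivAt_id s).mul_const n.2).const_add q.2
  exact hasDerivAt_Hf a b hf hg h0 h1

lemma contDiffAt_Fv (a b : ℝ) {p : ℝ × ℝ} (h0 : q0 p ≠ 0) (h1 : q1 p ≠ 0) :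
    ContDiffAt ℝ 1 (Fv a b) p := by
  have c1 : ContDiff ℝ 1 (fun p : ℝ × ℝ => p.1) := contDiff_fst
  have c2 : ContDiff ℝ 1 (fun p : ℝ × ℝ => p.2) := contDiff_snd
  have cq0 : ContDiff ℝ 1 (q0 : ℝ × ℝ → ℝ) := by
    unfold q0; exact (c1.pow 2).add (c2.pow 2)
  have cq1 : ContDiff ℝ 1 (q1 : ℝ × ℝ → ℝ) := by
    unfold q1; exact ((c1.sub contDiff_const).pow 2).add (c2.pow 2)
  have hq0 : ContDiffAt ℝ 1 (fun p : ℝ × ℝ => q0 p) p := cq0.contDiffAt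
  have hq1 : ContDiffAt ℝ 1 (fun p : ℝ × ℝ => q1 p) p := cq1.contDiffAt
  apply ContDiffAt.prodMk
  · exact ((contDiffAt_const.mul c2.contDiffAt).sub
      (contDiffAt_const.mul (c2.contDiffAt.div hq1 h1))).sub
      (contDiffAt_const.mul (c2.contDiffAt.div hq0 h0))
  · exact ((contDiffAt_const.mul c1.contDiffAt).neg.add
      (contDiffAt_const.mul ((c1.contDiffAt.sub contDiffAt_const).div hq1 h1))).add
      (contDiffAt_const.mul (c1.contDiffAt.div hq0 h0))


/-- From `X - Y - Z = c` we get triangle inequality bounds. -/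
private lemma tri₁ {X Y Z c : ℝ} (h : X - Y - Z = c) : |Z| ≤ |X| + |Y| + |c| :=
  abs_le.mpr ⟨by linarith [le_abs_self X, neg_abs_le X, le_abs_self Y, neg_abs_le Y,
      le_abs_self c, neg_abs_le c],
    by linarith [le_abs_self X, neg_abs_le X, le_abs_self Y, neg_abs_le Y,
      le_abs_self c, neg_abs_le c]⟩

private lemma tri₂ {X Y Z c : ℝ} (h : X - Y - Z = c) : |X| ≤ |Y| + |Z| + |c| :=
  abs_le.mpr ⟨by linarith [le_abs_self Y, neg_abs_le Y, le_abs_self Z, neg_abs_le Z,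
      le_abs_self c, neg_abs_le c],
    by linarith [le_abs_self Y, neg_abs_le Y, le_abs_self Z, neg_abs_le Z,
      le_abs_self c, neg_abs_le c]⟩

private lemma tri₃ {X Y Z c : ℝ} (h : X - Y - Z = c) : |Y| ≤ |X| + |Z| + |c| :=
  abs_le.mpr ⟨by linarith [le_abs_self X, neg_abs_le X, le_abs_self Z, neg_abs_le Z,
      le_abs_self c, neg_abs_le c],
    by linarith [le_abs_self X, neg_abs_le X, le_abs_self Z, neg_abs_le Z,
      le_abs_self c, neg_abs_le c]⟩

set_option maxHeartbeats 1000000 in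
/-- Regime 1 : `q0` small is impossible on the level set. -/
private lemma reg_small0 {a b c L : ℝ} (hA : 0 < |a| / 2) (hB : 0 < |b| / 2)
    (hL : |a| / 2 * L = |c| + |a| / 2 + 3 * (|b| / 2) + 1) {p : ℝ × ℝ}
    (hq0p : 0 < q0 p) (hq1p : 0 < q1 p) (hc : Hf a b p = c)
    (h14 : q0 p < 1 / 4) (hlog : Real.log (q0 p) < -L) : False := by
  set A := |a| / 2
  set B := |b| / 2
  have habsa : |a / 2| = A := by rw [abs_div]; norm_num; rfl
  have habsb : |b / 2| = B := by rw [abs_div]; norm_num; rfl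
  have hq0def : q0 p = p.1 ^ 2 + p.2 ^ 2 := rfl
  have hq1def : q1 p = (p.1 - 1) ^ 2 + p.2 ^ 2 := rfl
  have hcX : a / 2 * q0 p - b / 2 * Real.log (q1 p) - a / 2 * Real.log (q0 p) = c := hc
  have hLpos : 0 < L := by nlinarith [abs_nonneg c]
  have hp1 : p.1 < 1 / 2 ∧ -(1 / 2) < p.1 := by
    constructor <;> nlinarith [hq0def, sq_nonneg p.2, sq_nonneg (p.1 - 1 / 2),
      sq_nonneg (p.1 + 1 / 2)]
  have hq1lb : 1 / 4 ≤ q1 p := by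
    rw [hq1def]; nlinarith [hp1.1, sq_nonneg p.2]
  have hq1ub : q1 p ≤ 9 / 4 := by
    rw [hq1def]; nlinarith [hp1.2, hq0def, sq_nonneg (p.1 - 1)]
  have hlogq1 : |Real.log (q1 p)| ≤ 3 := by
    rw [abs_le]
    constructor
    · have h1 : Real.log (q1 p)⁻¹ ≤ (q1 p)⁻¹ - 1 :=
        Real.log_le_sub_one_of_pos (by positivity)
      have h2 : (q1 p)⁻¹ ≤ 4 := by
        rw [inv_le_comm₀ hq1p (by norm_num)]; linarith
      rw [Real.log_inv] at h1; linarith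
    · have := Real.log_le_sub_one_of_pos hq1p; linarith
  have hZ : A * L ≤ |a / 2 * Real.log (q0 p)| := by
    rw [abs_mul, habsa]
    have h3 : L ≤ |Real.log (q0 p)| := by
      rw [abs_of_neg (by linarith : Real.log (q0 p) < 0)]; linarith
    nlinarith
  have htri := tri₁ hcX
  have hX : |a / 2 * q0 p| ≤ A * (1 / 4) := by
    rw [abs_mul, habsa, abs_of_nonneg (q0_nonneg p)]; nlinarith
  have hY : |b / 2 * Real.log (q1 p)| ≤ B * 3 := by
    rw [abs_mul, habsb]; nlinarith [abs_nonneg (Real.log (q1 p))]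
  nlinarith

set_option maxHeartbeats 1000000 in
/-- Regime 2 : `q1` small is impossible on the level set. -/
private lemma reg_small1 {a b c L : ℝ} (hA : 0 < |a| / 2) (hB : 0 < |b| / 2)
    (hL : |b| / 2 * L = |c| + 6 * (|a| / 2) + 1) {p : ℝ × ℝ}
    (hq0p : 0 < q0 p) (hq1p : 0 < q1 p) (hc : Hf a b p = c)
    (h14 : q1 p < 1 / 4) (hlog : Real.log (q1 p) < -L) : False := by
  set A := |a| / 2
  set B := |b| / 2
  have habsa : |a / 2| = A := by rw [abs_div]; norm_num; rfl
  have habsb : |b / 2| = B := by rw [abs_div]; norm_num; rfl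
  have hq0def : q0 p = p.1 ^ 2 + p.2 ^ 2 := rfl
  have hq1def : q1 p = (p.1 - 1) ^ 2 + p.2 ^ 2 := rfl
  have hcX : a / 2 * q0 p - b / 2 * Real.log (q1 p) - a / 2 * Real.log (q0 p) = c := hc
  have hLpos : 0 < L := by nlinarith [abs_nonneg c]
  have hp1 : p.1 - 1 < 1 / 2 ∧ -(1 / 2) < p.1 - 1 := by
    constructor <;> nlinarith [hq1def, sq_nonneg p.2, sq_nonneg (p.1 - 1 - 1 / 2),
      sq_nonneg (p.1 - 1 + 1 / 2)]
  have hq0lb : 1 / 4 ≤ q0 p := by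
    rw [hq0def]; nlinarith [hp1.2, sq_nonneg p.2]
  have hq0ub : q0 p ≤ 5 / 2 := by
    have hp2 : p.2 ^ 2 < 1 / 4 := by nlinarith [hq1def, sq_nonneg (p.1 - 1)]
    rw [hq0def]; nlinarith [hp1.1, hp1.2]
  have hlogq0 : |Real.log (q0 p)| ≤ 3 := by
    rw [abs_le]
    constructor
    · have h1 : Real.log (q0 p)⁻¹ ≤ (q0 p)⁻¹ - 1 :=
        Real.log_le_sub_one_of_pos (by positivity)
      have h2 : (q0 p)⁻¹ ≤ 4 := by
        rw [inv_le_comm₀ hq0p (by norm_num)]; linarith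
      rw [Real.log_inv] at h1; linarith
    · have := Real.log_le_sub_one_of_pos hq0p; linarith
  have hY : B * L ≤ |b / 2 * Real.log (q1 p)| := by
    rw [abs_mul, habsb]
    have h3 : L ≤ |Real.log (q1 p)| := by
      rw [abs_of_neg (by linarith : Real.log (q1 p) < 0)]; linarith
    nlinarith
  have htri := tri₃ hcX
  have hX : |a / 2 * q0 p| ≤ A * (5 / 2) := by
    rw [abs_mul, habsa, abs_of_nonneg (q0_nonneg p)]; nlinarith
  have hZ : |a / 2 * Real.log (q0 p)| ≤ A * 3 := by
    rw [abs_mul, habsa]; nlinarith [abs_nonneg (Real.log (q0 p))]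
  nlinarith

set_option maxHeartbeats 1000000 in
/-- Regime 3 : `q0` large is impossible on the level set. -/
private lemma reg_big {a b c s : ℝ} (hA : 0 < |a| / 2) (hB : 0 < |b| / 2)
    (hs3 : 3 ≤ s) (hAs : 4 * (|b| / 2) + 2 * (|a| / 2) + |c| + 1 ≤ |a| / 2 * s)
    {p : ℝ × ℝ} (hq0p : 0 < q0 p) (hq1p : 0 < q1 p) (hc : Hf a b p = c)
    (hss : s ^ 2 = q0 p) : False := by
  set A := |a| / 2
  set B := |b| / 2
  have habsa : |a / 2| = A := by rw [abs_div]; norm_num; rfl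
  have habsb : |b / 2| = B := by rw [abs_div]; norm_num; rfl
  have hq0def : q0 p = p.1 ^ 2 + p.2 ^ 2 := rfl
  have hq1eq : q1 p = q0 p + 1 - 2 * p.1 := by simp only [q0, q1]; ring
  have hcX : a / 2 * q0 p - b / 2 * Real.log (q1 p) - a / 2 * Real.log (q0 p) = c := hc
  have hp1abs : |p.1| ≤ s := by
    have h1 : |p.1| = Real.sqrt (p.1 ^ 2) := (Real.sqrt_sq_eq_abs p.1).symm
    have h2 : Real.sqrt (p.1 ^ 2) ≤ Real.sqrt (s ^ 2) := by
      apply Real.sqrt_le_sqrt; rw [hss]; nlinarith [hq0def, sq_nonneg p.2]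
    rw [h1]
    calc Real.sqrt (p.1 ^ 2) ≤ Real.sqrt (s ^ 2) := h2
      _ = |s| := Real.sqrt_sq_eq_abs s
      _ = s := abs_of_nonneg (by linarith)
  have hq1lb : (s - 1) ^ 2 ≤ q1 p := by
    rw [hq1eq, ← hss]; nlinarith [le_abs_self p.1]
  have hq1ub : q1 p ≤ (s + 1) ^ 2 := by
    rw [hq1eq, ← hss]; nlinarith [neg_abs_le p.1]
  have hlogq1ub : Real.log (q1 p) ≤ 2 * s := by
    have h1 : Real.log (q1 p) ≤ Real.log ((s + 1) ^ 2) :=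
      Real.log_le_log hq1p hq1ub
    have h2 : Real.log ((s + 1) ^ 2) = 2 * Real.log (s + 1) := by
      rw [Real.log_pow]; push_cast; ring
    have h3 : Real.log (s + 1) ≤ s := by
      have := Real.log_le_sub_one_of_pos (by linarith : (0:ℝ) < s + 1)
      linarith
    linarith
  have hlogq1lb : 0 ≤ Real.log (q1 p) := by
    apply Real.log_nonneg; nlinarith
  have hlogq0ub : Real.log (q0 p) ≤ 2 * s := by
    have h0 : Real.log (q0 p) = 2 * Real.log s := by
      rw [← hss, Real.log_pow]; push_cast; ring
    have h3 : Real.log s ≤ s := by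
      have := Real.log_le_sub_one_of_pos (by linarith : (0:ℝ) < s)
      linarith
    linarith
  have hlogq0lb : 0 ≤ Real.log (q0 p) := by
    apply Real.log_nonneg; nlinarith
  have htri := tri₂ hcX
  have hX : |a / 2 * q0 p| = A * s ^ 2 := by
    rw [abs_mul, habsa, abs_of_nonneg (q0_nonneg p), hss]
  have hY : |b / 2 * Real.log (q1 p)| ≤ B * (2 * s) := by
    rw [abs_mul, habsb, abs_of_nonneg hlogq1lb]; nlinarith
  have hZ : |a / 2 * Real.log (q0 p)| ≤ A * (2 * s) := by
    rw [abs_mul, habsa, abs_of_nonneg hlogq0lb]; nlinarith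
  rw [hX] at htri
  nlinarith [abs_nonneg c]

/-- Any point of a level set of the Hamiltonian (inside the domain) is
uniformly away from the two singular points and from infinity. -/
lemma confinement (a b c : ℝ) (ha : a ≠ 0) (hb : b ≠ 0) :
    ∃ ε > 0, ∃ S : ℝ, ∀ p : ℝ × ℝ, q0 p ≠ 0 → q1 p ≠ 0 → Hf a b p = c →
      ε ≤ q0 p ∧ q0 p ≤ S ∧ ε ≤ q1 p := by
  have hA : 0 < |a| / 2 := div_pos (abs_pos.mpr ha) two_pos
  have hB : 0 < |b| / 2 := div_pos (abs_pos.mpr hb) two_pos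
  obtain ⟨L₀, hL₀⟩ : ∃ L, |a| / 2 * L = |c| + |a| / 2 + 3 * (|b| / 2) + 1 :=
    ⟨(|c| + |a| / 2 + 3 * (|b| / 2) + 1) / (|a| / 2), by field_simp⟩
  obtain ⟨L₁, hL₁⟩ : ∃ L, |b| / 2 * L = |c| + 6 * (|a| / 2) + 1 :=
    ⟨(|c| + 6 * (|a| / 2) + 1) / (|b| / 2), by field_simp⟩
  obtain ⟨s₀, hs₀3, hs₀A⟩ : ∃ s₀, 3 ≤ s₀ ∧
      4 * (|b| / 2) + 2 * (|a| / 2) + |c| + 1 ≤ |a| / 2 * s₀ := by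
    refine ⟨max 3 ((4 * (|b| / 2) + 2 * (|a| / 2) + |c| + 1) / (|a| / 2)), le_max_left _ _, ?_⟩
    have h1 : (4 * (|b| / 2) + 2 * (|a| / 2) + |c| + 1) / (|a| / 2)
        ≤ max 3 ((4 * (|b| / 2) + 2 * (|a| / 2) + |c| + 1) / (|a| / 2)) := le_max_right _ _
    calc 4 * (|b| / 2) + 2 * (|a| / 2) + |c| + 1
        = (4 * (|b| / 2) + 2 * (|a| / 2) + |c| + 1) / (|a| / 2) * (|a| / 2) := by field_simp
      _ ≤ max 3 ((4 * (|b| / 2) + 2 * (|a| / 2) + |c| + 1) / (|a| / 2)) * (|a| / 2) := by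
          apply mul_le_mul_of_nonneg_right h1 hA.le
      _ = |a| / 2 * max 3 ((4 * (|b| / 2) + 2 * (|a| / 2) + |c| + 1) / (|a| / 2)) := by ring
  refine ⟨min (min (1 / 4) (Real.exp (-L₀))) (min (1 / 4) (Real.exp (-L₁))),
    lt_min (lt_min (by norm_num) (Real.exp_pos _)) (lt_min (by norm_num) (Real.exp_pos _)),
    s₀ ^ 2, ?_⟩
  intro p hq0 hq1 hc
  have hq0p : 0 < q0 p := (q0_nonneg p).lt_of_ne' hq0
  have hq1p : 0 < q1 p := (q1_nonneg p).lt_of_ne' hq1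
  refine ⟨?_, ?_, ?_⟩
  · refine le_trans (min_le_left _ _) ?_
    by_contra hcon
    push_neg at hcon
    refine reg_small0 hA hB hL₀ hq0p hq1p hc
      (lt_of_lt_of_le hcon (min_le_left _ _)) ?_
    have := Real.log_lt_log hq0p (lt_of_lt_of_le hcon (min_le_right _ _))
    rwa [Real.log_exp] at this
  · by_contra hcon
    push_neg at hcon
    set s := Real.sqrt (q0 p) with hsdef
    have hss : s ^ 2 = q0 p := Real.sq_sqrt (q0_nonneg p)
    have hs_ge : s₀ ≤ s := by
      by_contra hcon2
      push_neg at hcon2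
      have h0s : 0 ≤ s := Real.sqrt_nonneg _
      nlinarith
    exact reg_big hA hB (le_trans hs₀3 hs_ge)
      (le_trans hs₀A (mul_le_mul_of_nonneg_left hs_ge (by positivity))) hq0p hq1p hc hss
  · refine le_trans (min_le_right _ _) ?_
    by_contra hcon
    push_neg at hcon
    refine reg_small1 hA hB hL₁ hq0p hq1p hc
      (lt_of_lt_of_le hcon (min_le_left _ _)) ?_
    have := Real.log_lt_log hq1p (lt_of_lt_of_le hcon (min_le_right _ _))
    rwa [Real.log_exp] at this


lemma coord₁ (p r : ℝ × ℝ) : |p.1 - r.1| ≤ dist p r := by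
  calc |p.1 - r.1| = dist p.1 r.1 := (Real.dist_eq _ _).symm
    _ ≤ _ := by rw [Prod.dist_eq]; exact le_max_left _ _

lemma coord₂ (p r : ℝ × ℝ) : |p.2 - r.2| ≤ dist p r := by
  calc |p.2 - r.2| = dist p.2 r.2 := (Real.dist_eq _ _).symm
    _ ≤ _ := by rw [Prod.dist_eq]; exact le_max_right _ _

lemma dot_eq (a b : ℝ) (p w : ℝ × ℝ) :
    HU a b p * (-w.2) + HV a b p * w.1
      = (Fv a b p).1 * w.1 + (Fv a b p).2 * w.2 := by
  simp only [Fv_eq]; ring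

end Stmt10


set_option maxHeartbeats 1000000 in
/-- A global solution that stays a positive distance away from every equilibrium
point of the system is periodic. -/
theorem stmt_10 (Γ₀ Γ₁ : ℝ) (hΓ₀ : Γ₀ ≠ 0) (hΓ₁ : Γ₁ ≠ 0) (u v : ℝ → ℝ)
    (havoid : ∀ t : ℝ, (u t, v t) ≠ ((0 : ℝ), (0 : ℝ)) ∧ (u t, v t) ≠ ((1 : ℝ), (0 : ℝ)))
    (hu : ∀ t : ℝ, HasDerivAt u
      ((Γ₀ / (2 * Real.pi)) * v t
        - (Γ₁ / (2 * Real.pi)) * (v t / ((u t - 1) ^ 2 + v t ^ 2))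
        - (Γ₀ / (2 * Real.pi)) * (v t / (u t ^ 2 + v t ^ 2))) t)
    (hv : ∀ t : ℝ, HasDerivAt v
      (-((Γ₀ / (2 * Real.pi)) * u t)
        + (Γ₁ / (2 * Real.pi)) * ((u t - 1) / ((u t - 1) ^ 2 + v t ^ 2))
        + (Γ₀ / (2 * Real.pi)) * (u t / (u t ^ 2 + v t ^ 2))) t)
    (hδ : ∃ δ > 0, ∀ t : ℝ, ∀ u' v' : ℝ,
      (u', v') ≠ ((0 : ℝ), (0 : ℝ)) → (u', v') ≠ ((1 : ℝ), (0 : ℝ)) →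
      ((Γ₀ / (2 * Real.pi)) * v'
          - (Γ₁ / (2 * Real.pi)) * (v' / ((u' - 1) ^ 2 + v' ^ 2))
          - (Γ₀ / (2 * Real.pi)) * (v' / (u' ^ 2 + v' ^ 2)) = 0 ∧
        -((Γ₀ / (2 * Real.pi)) * u')
          + (Γ₁ / (2 * Real.pi)) * ((u' - 1) / ((u' - 1) ^ 2 + v' ^ 2))
          + (Γ₀ / (2 * Real.pi)) * (u' / (u' ^ 2 + v' ^ 2)) = 0) →
      δ ≤ Real.sqrt ((u t - u') ^ 2 + (v t - v') ^ 2)) :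
    ∃ T > 0, ∀ t : ℝ, u (t + T) = u t ∧ v (t + T) = v t := by
  obtain ⟨δ, hδpos, hδ'⟩ := hδ
  have hπ : (2 : ℝ) * Real.pi ≠ 0 := by positivity
  set a := Γ₀ / (2 * Real.pi) with ha'
  set b := Γ₁ / (2 * Real.pi) with hb'
  have ha : a ≠ 0 := div_ne_zero hΓ₀ hπ
  have hb : b ≠ 0 := div_ne_zero hΓ₁ hπ
  set x : ℝ → ℝ × ℝ := fun t => (u t, v t) with hxdef
  have hq0x : ∀ t, Stmt10.q0 (x t) ≠ 0 := by
    intro t h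
    apply (havoid t).1
    have hq : u t ^ 2 + v t ^ 2 = 0 := h
    have h1 : u t ^ 2 = 0 := le_antisymm (by nlinarith [sq_nonneg (v t)]) (sq_nonneg _)
    have h2 : v t ^ 2 = 0 := le_antisymm (by nlinarith [sq_nonneg (u t)]) (sq_nonneg _)
    rw [pow_eq_zero_iff two_ne_zero] at h1 h2
    rw [h1, h2]
  have hq1x : ∀ t, Stmt10.q1 (x t) ≠ 0 := by
    intro t h
    apply (havoid t).2
    have hq : (u t - 1) ^ 2 + v t ^ 2 = 0 := h
    have h1 : (u t - 1) ^ 2 = 0 := le_antisymm (by nlinarith [sq_nonneg (v t)]) (sq_nonneg _)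
    have h2 : v t ^ 2 = 0 := le_antisymm (by nlinarith [sq_nonneg (u t - 1)]) (sq_nonneg _)
    rw [pow_eq_zero_iff two_ne_zero] at h1 h2
    rw [h2, show u t = 1 by nlinarith [sq_nonneg (u t - 1)]]
  have hx' : ∀ t, HasDerivAt x (Stmt10.Fv a b (x t)) t := fun t => (hu t).prodMk (hv t)
  have hφconst : ∀ t, Stmt10.Hf a b (x t) = Stmt10.Hf a b (x 0) := by
    have hder : ∀ t, HasDerivAt (fun s => Stmt10.Hf a b (x s)) 0 t := by
      intro t
      have h := Stmt10.hasDerivAt_Hf a b (hu t) (hv t) (hq0x t) (hq1x t)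
      have h2 : Stmt10.HU a b (u t, v t) *
          (a * v t - b * (v t / ((u t - 1) ^ 2 + v t ^ 2)) - a * (v t / (u t ^ 2 + v t ^ 2)))
          + Stmt10.HV a b (u t, v t) *
          (-(a * u t) + b * ((u t - 1) / ((u t - 1) ^ 2 + v t ^ 2))
            + a * (u t / (u t ^ 2 + v t ^ 2))) = 0 := by
        simp only [Stmt10.HU, Stmt10.HV, Stmt10.q0, Stmt10.q1]
        ring
      rw [h2] at h
      exact h
    intro t
    exact is_const_of_deriv_eq_zero (fun s => (hder s).differentiableAt)
      (fun s => (hder s).deriv) t 0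
  obtain ⟨ε, hεpos, S, hKdef⟩ := Stmt10.confinement a b (Stmt10.Hf a b (x 0)) ha hb
  set K : Set (ℝ × ℝ) := {p | ε ≤ Stmt10.q0 p ∧ Stmt10.q0 p ≤ S ∧ ε ≤ Stmt10.q1 p} with hKd
  have hxK : ∀ t, x t ∈ K := fun t => hKdef _ (hq0x t) (hq1x t) (hφconst t)
  have cq0 : Continuous Stmt10.q0 := by unfold Stmt10.q0; fun_prop
  have cq1 : Continuous Stmt10.q1 := by unfold Stmt10.q1; fun_prop
  have hKclosed : IsClosed K := by
    have h1 : IsClosed {p : ℝ × ℝ | ε ≤ Stmt10.q0 p} := isClosed_le continuous_const cq0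
    have h2 : IsClosed {p : ℝ × ℝ | Stmt10.q0 p ≤ S} := isClosed_le cq0 continuous_const
    have h3 : IsClosed {p : ℝ × ℝ | ε ≤ Stmt10.q1 p} := isClosed_le continuous_const cq1
    exact h1.inter (h2.inter h3)
  have hKbounded : Bornology.IsBounded K := by
    apply (Metric.isBounded_closedBall (x := ((0 : ℝ), (0 : ℝ))) (r := Real.sqrt S)).subset
    rintro p ⟨h1, h2, h3⟩
    rw [Metric.mem_closedBall, Prod.dist_eq]
    have hb1 : |p.1| ≤ Real.sqrt S := by
      rw [← Real.sqrt_sq_eq_abs]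
      apply Real.sqrt_le_sqrt
      have h : Stmt10.q0 p = p.1 ^ 2 + p.2 ^ 2 := rfl
      nlinarith [sq_nonneg p.2]
    have hb2 : |p.2| ≤ Real.sqrt S := by
      rw [← Real.sqrt_sq_eq_abs]
      apply Real.sqrt_le_sqrt
      have h : Stmt10.q0 p = p.1 ^ 2 + p.2 ^ 2 := rfl
      nlinarith [sq_nonneg p.1]
    apply max_le <;> rw [Real.dist_eq] <;> simpa
  have hKcompact : IsCompact K := isCompact_of_isClosed_isBounded hKclosed hKbounded
  have hq0K : ∀ p ∈ K, Stmt10.q0 p ≠ 0 := fun p hp => (lt_of_lt_of_le hεpos hp.1).ne'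
  have hq1K : ∀ p ∈ K, Stmt10.q1 p ≠ 0 := fun p hp => (lt_of_lt_of_le hεpos hp.2.2).ne'
  have hFvcont : ∀ p ∈ K, ContinuousAt (Stmt10.Fv a b) p := fun p hp =>
    (Stmt10.contDiffAt_Fv a b (hq0K p hp) (hq1K p hp)).continuousAt
  -- maximal speed on K
  have hsq : ContinuousOn (fun p => (Stmt10.Fv a b p).1 ^ 2 + (Stmt10.Fv a b p).2 ^ 2) K := by
    intro p hp
    have h := hFvcont p hp
    exact (((continuous_fst.continuousAt.comp h).pow 2).add
      ((continuous_snd.continuousAt.comp h).pow 2)).continuousWithinAt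
  obtain ⟨pM, hpM, hmax⟩ := hKcompact.exists_isMaxOn ⟨x 0, hxK 0⟩ hsq
  set M : ℝ := Real.sqrt ((Stmt10.Fv a b pM).1 ^ 2 + (Stmt10.Fv a b pM).2 ^ 2) + 1 with hMd
  have hMpos : 0 < M := by positivity
  have hspeed : ∀ t : ℝ, |(Stmt10.Fv a b (x t)).1| ≤ M ∧ |(Stmt10.Fv a b (x t)).2| ≤ M := by
    intro t
    have h := hmax (hxK t)
    simp only [Set.mem_setOf_eq] at h
    have hs : 0 ≤ Real.sqrt ((Stmt10.Fv a b pM).1 ^ 2 + (Stmt10.Fv a b pM).2 ^ 2) :=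
      Real.sqrt_nonneg _
    have hsq2 : Real.sqrt ((Stmt10.Fv a b pM).1 ^ 2 + (Stmt10.Fv a b pM).2 ^ 2) ^ 2
        = (Stmt10.Fv a b pM).1 ^ 2 + (Stmt10.Fv a b pM).2 ^ 2 :=
      Real.sq_sqrt (by positivity)
    constructor
    · nlinarith [abs_nonneg (Stmt10.Fv a b (x t)).1, sq_abs (Stmt10.Fv a b (x t)).1,
        sq_nonneg (Stmt10.Fv a b (x t)).2,
        sq_nonneg (|(Stmt10.Fv a b (x t)).1| - Real.sqrt ((Stmt10.Fv a b pM).1 ^ 2 + (Stmt10.Fv a b pM).2 ^ 2))]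
    · nlinarith [abs_nonneg (Stmt10.Fv a b (x t)).2, sq_abs (Stmt10.Fv a b (x t)).2,
        sq_nonneg (Stmt10.Fv a b (x t)).1,
        sq_nonneg (|(Stmt10.Fv a b (x t)).2| - Real.sqrt ((Stmt10.Fv a b pM).1 ^ 2 + (Stmt10.Fv a b pM).2 ^ 2))]
  have hulip : ∀ s t : ℝ, |u s - u t| ≤ M * |s - t| := by
    intro s t
    have h := Convex.norm_image_sub_le_of_norm_hasDerivWithin_le
      (f := u) (f' := fun τ => (Stmt10.Fv a b (x τ)).1) (C := M) (s := Set.univ)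
      (fun τ _ => (hu τ).hasDerivWithinAt)
      (fun τ _ => by rw [Real.norm_eq_abs]; exact (hspeed τ).1)
      convex_univ (Set.mem_univ t) (Set.mem_univ s)
    rw [Real.norm_eq_abs, Real.norm_eq_abs] at h
    exact h
  have hvlip : ∀ s t : ℝ, |v s - v t| ≤ M * |s - t| := by
    intro s t
    have h := Convex.norm_image_sub_le_of_norm_hasDerivWithin_le
      (f := v) (f' := fun τ => (Stmt10.Fv a b (x τ)).2) (C := M) (s := Set.univ)
      (fun τ _ => (hv τ).hasDerivWithinAt)
      (fun τ _ => by rw [Real.norm_eq_abs]; exact (hspeed τ).2)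
      convex_univ (Set.mem_univ t) (Set.mem_univ s)
    rw [Real.norm_eq_abs, Real.norm_eq_abs] at h
    exact h
  have hxlip : ∀ s t : ℝ, dist (x s) (x t) ≤ M * |s - t| := by
    intro s t
    rw [Prod.dist_eq]
    apply max_le <;> rw [Real.dist_eq]
    · exact hulip s t
    · exact hvlip s t
  -- a limit point of the orbit
  obtain ⟨q, hqK', φ, hφmono, hφtend⟩ :=
    tendsto_subseq_of_bounded hKbounded (fun n : ℕ => hxK n)
  rw [hKclosed.closure_eq] at hqK'
  have hq0q : Stmt10.q0 q ≠ 0 := hq0K q hqK'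
  have hq1q : Stmt10.q1 q ≠ 0 := hq1K q hqK'
  -- the limit point is not an equilibrium
  have hFq : Stmt10.Fv a b q ≠ 0 := by
    intro h0
    have hne0 : (q.1, q.2) ≠ ((0 : ℝ), (0 : ℝ)) := by
      intro h
      apply hq0q
      rw [Prod.mk.injEq] at h
      show q.1 ^ 2 + q.2 ^ 2 = 0
      rw [h.1, h.2]; ring
    have hne1 : (q.1, q.2) ≠ ((1 : ℝ), (0 : ℝ)) := by
      intro h
      apply hq1q
      rw [Prod.mk.injEq] at h
      show (q.1 - 1) ^ 2 + q.2 ^ 2 = 0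
      rw [h.1, h.2]; ring
    have heq1 : a * q.2 - b * (q.2 / ((q.1 - 1) ^ 2 + q.2 ^ 2))
        - a * (q.2 / (q.1 ^ 2 + q.2 ^ 2)) = 0 := congrArg Prod.fst h0
    have heq2 : -(a * q.1) + b * ((q.1 - 1) / ((q.1 - 1) ^ 2 + q.2 ^ 2))
        + a * (q.1 / (q.1 ^ 2 + q.2 ^ 2)) = 0 := congrArg Prod.snd h0
    have hgen : ∀ t : ℝ, δ ≤ Real.sqrt ((u t - q.1) ^ 2 + (v t - q.2) ^ 2) :=
      fun t => hδ' t q.1 q.2 hne0 hne1 ⟨heq1, heq2⟩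
    obtain ⟨N, hN⟩ := (Metric.tendsto_atTop.mp hφtend) (δ / 2) (by positivity)
    have hd : dist (x (φ N)) q < δ / 2 := hN N le_rfl
    have h1 : |u (φ N) - q.1| < δ / 2 := by
      have h := lt_of_le_of_lt (Stmt10.coord₁ (x (φ N)) q) hd
      exact h
    have h2 : |v (φ N) - q.2| < δ / 2 := by
      have h := lt_of_le_of_lt (Stmt10.coord₂ (x (φ N)) q) hd
      exact h
    have h3 : Real.sqrt ((u (φ N) - q.1) ^ 2 + (v (φ N) - q.2) ^ 2) < δ := by
      apply (Real.sqrt_lt' hδpos).mpr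
      nlinarith [sq_abs (u (φ N) - q.1), sq_abs (v (φ N) - q.2),
        abs_nonneg (u (φ N) - q.1), abs_nonneg (v (φ N) - q.2)]
    exact absurd (hgen (φ N)) (not_le.mpr h3)
  set w := Stmt10.Fv a b q with hwd
  have hm2 : 0 < w.1 ^ 2 + w.2 ^ 2 := by
    rcases (lt_or_eq_of_le (by positivity : (0:ℝ) ≤ w.1 ^ 2 + w.2 ^ 2)) with h | h
    · exact h
    · exfalso
      apply hFq
      have h1 : w.1 ^ 2 = 0 := le_antisymm (by nlinarith [sq_nonneg w.2]) (sq_nonneg _)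
      have h2 : w.2 ^ 2 = 0 := le_antisymm (by nlinarith [sq_nonneg w.1]) (sq_nonneg _)
      rw [pow_eq_zero_iff two_ne_zero] at h1 h2
      exact Prod.ext_iff.mpr ⟨h1, h2⟩
  set m2 : ℝ := w.1 ^ 2 + w.2 ^ 2 with hm2d
  -- transversal ball
  obtain ⟨ε₂, hε₂pos, hball⟩ : ∃ ε₂ > 0, ∀ p ∈ Metric.ball q ε₂,
      Stmt10.q0 p ≠ 0 ∧ Stmt10.q1 p ≠ 0 ∧
      m2 / 2 < (Stmt10.Fv a b p).1 * w.1 + (Stmt10.Fv a b p).2 * w.2 := by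
    have e1 : ∀ᶠ p in nhds q, Stmt10.q0 p ≠ 0 := cq0.continuousAt.eventually_ne hq0q
    have e2 : ∀ᶠ p in nhds q, Stmt10.q1 p ≠ 0 := cq1.continuousAt.eventually_ne hq1q
    have hdotc : ContinuousAt
        (fun p => (Stmt10.Fv a b p).1 * w.1 + (Stmt10.Fv a b p).2 * w.2) q := by
      have h := (Stmt10.contDiffAt_Fv a b hq0q hq1q).continuousAt
      exact ((continuous_fst.continuousAt.comp h).mul continuousAt_const).add
        ((continuous_snd.continuousAt.comp h).mul continuousAt_const)
    have e3 : ∀ᶠ p in nhds q,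
        m2 / 2 < (Stmt10.Fv a b p).1 * w.1 + (Stmt10.Fv a b p).2 * w.2 := by
      apply hdotc.eventually_mem (s := {y : ℝ | m2 / 2 < y})
      have hvalq : (Stmt10.Fv a b q).1 * w.1 + (Stmt10.Fv a b q).2 * w.2 = m2 := by
        rw [hm2d, ← hwd]; ring
      show {y : ℝ | m2 / 2 < y} ∈ nhds ((Stmt10.Fv a b q).1 * w.1 + (Stmt10.Fv a b q).2 * w.2)
      rw [hvalq]
      exact lt_mem_nhds (by linarith)
    have hall := (e1.and (e2.and e3))
    obtain ⟨ε₂, hε₂pos, hb2⟩ := Metric.eventually_nhds_iff_ball.mp hall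
    exact ⟨ε₂, hε₂pos, fun p hp => ⟨(hb2 p hp).1, (hb2 p hp).2.1, (hb2 p hp).2.2⟩⟩
  -- auxiliary constants
  set Δ : ℝ := ε₂ / 2 / (2 * M) with hΔd
  have hΔpos : 0 < Δ := by positivity
  set W : ℝ := |w.1| + |w.2| with hWd
  have hW : 0 ≤ W := by positivity
  set η : ℝ := min (ε₂ / 2 / 2) (m2 * Δ / (8 * (W + 1))) with hηd
  have hηpos : 0 < η := lt_min (by positivity) (by positivity)
  set g : ℝ → ℝ := fun t => (u t - q.1) * w.1 + (v t - q.2) * w.2 with hgd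
  have hg' : ∀ t, HasDerivAt g
      ((Stmt10.Fv a b (x t)).1 * w.1 + (Stmt10.Fv a b (x t)).2 * w.2) t := fun t =>
    (((hu t).sub_const q.1).mul_const w.1).add (((hv t).sub_const q.2).mul_const w.2)
  have hgcont : Continuous g :=
    continuous_iff_continuousAt.mpr fun t => (hg' t).continuousAt
  clear_value g M Δ W η m2
  -- the orbit hits the transversal near each approach to q
  have hit : ∀ t₀ : ℝ, dist (x t₀) q ≤ η →
      ∃ τ ∈ Icc (t₀ - Δ) (t₀ + Δ), g τ = 0 ∧ dist (x τ) q < ε₂ := by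
    intro t₀ hd
    have hMΔ : M * Δ = ε₂ / 2 / 2 := by
      rw [hΔd]; field_simp
    have hnear : ∀ τ ∈ Icc (t₀ - Δ) (t₀ + Δ), dist (x τ) q < ε₂ := by
      intro τ hτ
      have h2 : |τ - t₀| ≤ Δ := abs_le.mpr ⟨by linarith [hτ.1], by linarith [hτ.2]⟩
      have h3 : dist (x τ) q ≤ dist (x τ) (x t₀) + dist (x t₀) q := dist_triangle _ _ _
      have h4 : dist (x τ) (x t₀) ≤ M * Δ := le_trans (hxlip τ t₀) (by nlinarith)
      have hη1 : η ≤ ε₂ / 2 / 2 := le_trans (le_of_eq hηd) (min_le_left _ _)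
      have hgoal1 : dist (x τ) q ≤ M * Δ + η := by linarith
      have hgoal2 : M * Δ + η < ε₂ := by linarith
      linarith
    have hgder : ∀ τ ∈ Icc (t₀ - Δ) (t₀ + Δ),
        m2 / 2 ≤ (Stmt10.Fv a b (x τ)).1 * w.1 + (Stmt10.Fv a b (x τ)).2 * w.2 :=
      fun τ hτ => (hball _ (Metric.mem_ball.mpr (hnear τ hτ))).2.2.le
    have key : ∀ s t : ℝ, t₀ - Δ ≤ s → s < t → t ≤ t₀ + Δ →
        m2 / 2 * (t - s) ≤ g t - g s := by
      intro s t h1 h2 h3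
      obtain ⟨ξ, hξ, hslope⟩ := exists_hasDerivAt_eq_slope g
        (fun τ => (Stmt10.Fv a b (x τ)).1 * w.1 + (Stmt10.Fv a b (x τ)).2 * w.2) h2
        hgcont.continuousOn (fun τ _ => hg' τ)
      have hb2 := hgder ξ ⟨by linarith [hξ.1], by linarith [hξ.2]⟩
      rw [hslope] at hb2
      have hpos : 0 < t - s := by linarith
      calc m2 / 2 * (t - s) ≤ (g t - g s) / (t - s) * (t - s) := by nlinarith
        _ = g t - g s := by field_simp
    have h1 : |u t₀ - q.1| ≤ η := by
      have h := le_trans (Stmt10.coord₁ (x t₀) q) hd; exact h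
    have h2 : |v t₀ - q.2| ≤ η := by
      have h := le_trans (Stmt10.coord₂ (x t₀) q) hd; exact h
    have hg0 : |g t₀| ≤ η * W := by
      simp only [hgd]
      calc |(u t₀ - q.1) * w.1 + (v t₀ - q.2) * w.2|
          ≤ |(u t₀ - q.1) * w.1| + |(v t₀ - q.2) * w.2| := abs_add_le _ _
        _ = |u t₀ - q.1| * |w.1| + |v t₀ - q.2| * |w.2| := by rw [abs_mul, abs_mul]
        _ ≤ η * W := by
            rw [hWd]
            nlinarith [abs_nonneg w.1, abs_nonneg w.2, abs_nonneg (u t₀ - q.1),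
              abs_nonneg (v t₀ - q.2)]
    have hηW : η * W < m2 * Δ / 2 := by
      have hη2 : η ≤ m2 * Δ / (8 * (W + 1)) := le_trans (le_of_eq hηd) (min_le_right _ _)
      have h8 : (0:ℝ) < 8 * (W + 1) := by positivity
      have hmΔ : 0 < m2 * Δ := mul_pos hm2 hΔpos
      calc η * W ≤ m2 * Δ / (8 * (W + 1)) * W := by nlinarith
        _ < m2 * Δ / 2 := by
            rw [div_mul_eq_mul_div, div_lt_div_iff₀ h8 (by norm_num : (0:ℝ) < 2)]
            nlinarith
    have hgplus : 0 < g (t₀ + Δ) := by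
      have hk := key t₀ (t₀ + Δ) (by linarith) (by linarith) le_rfl
      have habs := abs_le.mp hg0
      nlinarith
    have hgminus : g (t₀ - Δ) < 0 := by
      have hk := key (t₀ - Δ) t₀ le_rfl (by linarith) (by linarith)
      have habs := abs_le.mp hg0
      nlinarith
    obtain ⟨τ, hτmem, hτ0⟩ := intermediate_value_Icc (by linarith : t₀ - Δ ≤ t₀ + Δ)
      hgcont.continuousOn ⟨hgminus.le, hgplus.le⟩
    exact ⟨τ, hτmem, hτ0, hnear τ hτmem⟩
  -- two distinct return times
  obtain ⟨τ₁, τ₂, hτord, hgτ₁, hgτ₂, hdτ₁, hdτ₂⟩ :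
      ∃ τ₁ τ₂ : ℝ, τ₁ + 1 ≤ τ₂ ∧ g τ₁ = 0 ∧ g τ₂ = 0 ∧
        dist (x τ₁) q < ε₂ ∧ dist (x τ₂) q < ε₂ := by
    obtain ⟨N, hN⟩ := (Metric.tendsto_atTop.mp hφtend) η hηpos
    have hd₁ : dist (x ((φ N : ℕ) : ℝ)) q < η := by
      have h := hN N le_rfl; exact h
    obtain ⟨τ₁, hτ₁mem, hgτ₁, hdτ₁⟩ := hit ((φ N : ℕ) : ℝ) hd₁.le
    obtain ⟨n₂, hn₂N, hn₂big⟩ : ∃ n₂ : ℕ, N ≤ n₂ ∧ (φ N : ℝ) + 2 * Δ + 1 ≤ (φ n₂ : ℝ) := by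
      refine ⟨max N (φ N + Nat.ceil (2 * Δ + 1)), le_max_left _ _, ?_⟩
      have h1 : φ N + Nat.ceil (2 * Δ + 1) ≤ max N (φ N + Nat.ceil (2 * Δ + 1)) :=
        le_max_right _ _
      have h2 : max N (φ N + Nat.ceil (2 * Δ + 1)) ≤ φ (max N (φ N + Nat.ceil (2 * Δ + 1))) :=
        hφmono.le_apply
      have h3 : (2 * Δ + 1 : ℝ) ≤ Nat.ceil (2 * Δ + 1) := Nat.le_ceil _
      have h4 : ((φ N + Nat.ceil (2 * Δ + 1) : ℕ) : ℝ)
          ≤ ((φ (max N (φ N + Nat.ceil (2 * Δ + 1))) : ℕ) : ℝ) := by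
        exact_mod_cast le_trans h1 h2
      push_cast at h4
      linarith
    have hd₂ : dist (x ((φ n₂ : ℕ) : ℝ)) q < η := by
      have h := hN n₂ hn₂N; exact h
    obtain ⟨τ₂, hτ₂mem, hgτ₂, hdτ₂⟩ := hit ((φ n₂ : ℕ) : ℝ) hd₂.le
    refine ⟨τ₁, τ₂, ?_, hgτ₁, hgτ₂, hdτ₁, hdτ₂⟩
    have hm1 := hτ₁mem.2
    have hm2' := hτ₂mem.1
    linarith
  -- the orbit returns to the same point
  have hsame : x τ₁ = x τ₂ := by
    have hm2ne : m2 ≠ 0 := hm2.ne'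
    have hrep : ∀ τ : ℝ, g τ = 0 →
        u τ = q.1 + ((-(u τ - q.1) * w.2 + (v τ - q.2) * w.1) / m2) * (-w.2) ∧
        v τ = q.2 + ((-(u τ - q.1) * w.2 + (v τ - q.2) * w.1) / m2) * w.1 := by
      intro τ h0
      have h0' : (u τ - q.1) * w.1 + (v τ - q.2) * w.2 = 0 := by
        rw [hgd] at h0; exact h0
      constructor
      · have h2 : (u τ - (q.1 + ((-(u τ - q.1) * w.2 + (v τ - q.2) * w.1) / m2) * (-w.2)))
            * m2 = 0 := by
          have hexp : (u τ - (q.1 + ((-(u τ - q.1) * w.2 + (v τ - q.2) * w.1) / m2) * (-w.2)))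
              * m2 = (u τ - q.1) * m2 + (-(u τ - q.1) * w.2 + (v τ - q.2) * w.1) * w.2 := by
            field_simp
            ring
          rw [hexp, hm2d]
          linear_combination w.1 * h0'
        have h3 := (mul_eq_zero.mp h2).resolve_right hm2ne
        linarith
      · have h2 : (v τ - (q.2 + ((-(u τ - q.1) * w.2 + (v τ - q.2) * w.1) / m2) * w.1))
            * m2 = 0 := by
          have hexp : (v τ - (q.2 + ((-(u τ - q.1) * w.2 + (v τ - q.2) * w.1) / m2) * w.1))
              * m2 = (v τ - q.2) * m2 - (-(u τ - q.1) * w.2 + (v τ - q.2) * w.1) * w.1 := by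
            field_simp
            ring
          rw [hexp, hm2d]
          linear_combination w.2 * h0'
        have h3 := (mul_eq_zero.mp h2).resolve_right hm2ne
        linarith
    have hdistline : ∀ sVal : ℝ,
        dist ((q.1 + sVal * (-w.2), q.2 + sVal * w.1) : ℝ × ℝ) q
          = |sVal| * max |w.2| |w.1| := by
      intro sVal
      rw [Prod.dist_eq]
      show max (dist (q.1 + sVal * (-w.2)) q.1) (dist (q.2 + sVal * w.1) q.2) = _
      rw [Real.dist_eq, Real.dist_eq]
      have e1 : q.1 + sVal * (-w.2) - q.1 = sVal * (-w.2) := by ring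
      have e2 : q.2 + sVal * w.1 - q.2 = sVal * w.1 := by ring
      rw [e1, e2, abs_mul, abs_mul, abs_neg]
      exact (mul_max_of_nonneg _ _ (abs_nonneg sVal)).symm
    obtain ⟨hu₁, hv₁⟩ := hrep τ₁ hgτ₁
    obtain ⟨hu₂, hv₂⟩ := hrep τ₂ hgτ₂
    set s₁ : ℝ := (-(u τ₁ - q.1) * w.2 + (v τ₁ - q.2) * w.1) / m2 with hs₁d
    set s₂ : ℝ := (-(u τ₂ - q.1) * w.2 + (v τ₂ - q.2) * w.1) / m2 with hs₂d
    have hx₁ : x τ₁ = (q.1 + s₁ * (-w.2), q.2 + s₁ * w.1) := Prod.ext_iff.mpr ⟨hu₁, hv₁⟩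
    have hx₂ : x τ₂ = (q.1 + s₂ * (-w.2), q.2 + s₂ * w.1) := Prod.ext_iff.mpr ⟨hu₂, hv₂⟩
    have hd₁' : |s₁| * max |w.2| |w.1| < ε₂ := by
      rw [hx₁, hdistline] at hdτ₁; exact hdτ₁
    have hd₂' : |s₂| * max |w.2| |w.1| < ε₂ := by
      rw [hx₂, hdistline] at hdτ₂; exact hdτ₂
    have hH₁ : Stmt10.Hf a b (q.1 + s₁ * (-w.2), q.2 + s₁ * w.1) = Stmt10.Hf a b (x 0) := by
      rw [← hx₁]; exact hφconst τ₁
    have hH₂ : Stmt10.Hf a b (q.1 + s₂ * (-w.2), q.2 + s₂ * w.1) = Stmt10.Hf a b (x 0) := by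
      rw [← hx₂]; exact hφconst τ₂
    have key2 : ∀ sa sb : ℝ, sa < sb → |sa| * max |w.2| |w.1| < ε₂ →
        |sb| * max |w.2| |w.1| < ε₂ →
        Stmt10.Hf a b (q.1 + sa * (-w.2), q.2 + sa * w.1) = Stmt10.Hf a b (x 0) →
        Stmt10.Hf a b (q.1 + sb * (-w.2), q.2 + sb * w.1) = Stmt10.Hf a b (x 0) → False := by
      intro sa sb hab hda hdb hHa hHb
      have hmem : ∀ s ∈ Icc sa sb,
          ((q.1 + s * (-w.2), q.2 + s * w.1) : ℝ × ℝ) ∈ Metric.ball q ε₂ := by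
        intro s hs
        rw [Metric.mem_ball, hdistline s]
        have habs : |s| ≤ max |sa| |sb| := by
          rw [abs_le]
          constructor
          · linarith [le_max_left |sa| |sb|, neg_abs_le sa, hs.1]
          · linarith [le_max_right |sa| |sb|, le_abs_self sb, hs.2]
        have hWm0 : 0 ≤ max |w.2| |w.1| := le_trans (abs_nonneg _) (le_max_left _ _)
        calc |s| * max |w.2| |w.1| ≤ max |sa| |sb| * max |w.2| |w.1| :=
              mul_le_mul_of_nonneg_right habs hWm0
          _ < ε₂ := by
              rcases max_cases |sa| |sb| with ⟨h, _⟩ | ⟨h, _⟩ <;> rw [h]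
              · exact hda
              · exact hdb
      have hψder : ∀ s ∈ Icc sa sb, HasDerivAt
          (fun s => Stmt10.Hf a b (q.1 + s * (-w.2), q.2 + s * w.1))
          (Stmt10.HU a b (q.1 + s * (-w.2), q.2 + s * w.1) * (-w.2)
            + Stmt10.HV a b (q.1 + s * (-w.2), q.2 + s * w.1) * w.1) s := by
        intro s hs
        have hm := hball _ (hmem s hs)
        have h := Stmt10.hasDerivAt_Hf_line a b q (-w.2, w.1) s hm.1 hm.2.1
        exact h
      have hcont : ContinuousOn
          (fun s => Stmt10.Hf a b (q.1 + s * (-w.2), q.2 + s * w.1)) (Icc sa sb) :=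
        fun s hs => ((hψder s hs).continuousAt).continuousWithinAt
      obtain ⟨ξ, hξ, hsl⟩ := exists_hasDerivAt_eq_slope _ _ hab hcont
        (fun s hs => hψder s (Ioo_subset_Icc_self hs))
      rw [hHa, hHb, sub_self, zero_div] at hsl
      have hdot := (hball _ (hmem ξ (Ioo_subset_Icc_self hξ))).2.2
      have hident := Stmt10.dot_eq a b (q.1 + ξ * (-w.2), q.2 + ξ * w.1) w
      rw [hident] at hsl
      rw [hsl] at hdot
      linarith
    rcases lt_trichotomy s₁ s₂ with hlt | heqs | hgt
    · exact (key2 s₁ s₂ hlt hd₁' hd₂' hH₁ hH₂).elim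
    · rw [hx₁, hx₂, heqs]
    · exact (key2 s₂ s₁ hgt hd₂' hd₁' hH₂ hH₁).elim
  -- periodicity via uniqueness of solutions
  set T : ℝ := τ₂ - τ₁ with hTd
  have hTpos : 0 < T := by rw [hTd]; linarith
  have hE : ∀ t, x (t + T) = x t := by
    have hxcont : Continuous x :=
      continuous_iff_continuousAt.mpr fun t => (hx' t).continuousAt
    have hycont : Continuous (fun τ => x (τ + T)) :=
      hxcont.comp (continuous_id.add continuous_const)
    set E : Set ℝ := {t | x (t + T) = x t} with hEd
    have hEmem : τ₁ ∈ E := by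
      show x (τ₁ + T) = x τ₁
      rw [hTd, show τ₁ + (τ₂ - τ₁) = τ₂ by ring]
      exact hsame.symm
    have hEclosed : IsClosed E := isClosed_eq hycont hxcont
    have hEopen : IsOpen E := by
      rw [isOpen_iff_mem_nhds]
      intro t₀ ht₀
      have ht₀' : x (t₀ + T) = x t₀ := ht₀
      obtain ⟨Kl, sl, hsl, hlip⟩ :=
        (Stmt10.contDiffAt_Fv a b (hq0x t₀) (hq1x t₀)).exists_lipschitzOnWith
      have hy' : ∀ t : ℝ, HasDerivAt (fun τ => x (τ + T)) (Stmt10.Fv a b (x (t + T))) t := by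
        intro t
        exact HasDerivAt.comp_add_const t T (hx' (t + T))
      have hfev : ∀ᶠ t in nhds t₀, HasDerivAt x (Stmt10.Fv a b (x t)) t ∧ x t ∈ sl := by
        filter_upwards [hxcont.continuousAt.eventually_mem hsl] with t ht
        exact ⟨hx' t, ht⟩
      have hslY : sl ∈ nhds ((fun τ => x (τ + T)) t₀) := by
        show sl ∈ nhds (x (t₀ + T))
        rw [ht₀']
        exact hsl
      have hgev : ∀ᶠ t in nhds t₀,
          HasDerivAt (fun τ => x (τ + T)) (Stmt10.Fv a b (x (t + T))) t ∧ x (t + T) ∈ sl := by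
        filter_upwards [hycont.continuousAt.eventually_mem hslY] with t ht
        exact ⟨hy' t, ht⟩
      have huniq := ODE_solution_unique_of_eventually
        (v := fun _ p => Stmt10.Fv a b p) (s := fun _ => sl) (Filter.Eventually.of_forall fun _ => hlip)
        hgev hfev ht₀'
      exact huniq
    rcases isClopen_iff.mp ⟨hEclosed, hEopen⟩ with h | h
    · exact absurd (h ▸ hEmem) (Set.notMem_empty τ₁)
    · intro t
      have : t ∈ E := h ▸ Set.mem_univ t
      exact this
  exact ⟨T, hTpos, fun t => ⟨congrArg Prod.fst (hE t), congrArg Prod.snd (hE t)⟩⟩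
end

section
/- Let I ⊆ ℝ be an open interval and let u: I → ℝ be a differentiable function such that for every α ∈ I, u(α) ∉ {0, 1} and u(α)³ − u(α)² − (α+1)·u(α) + 1 = 0. Define g(α) = f(u(α), α) where f(u,α) = log(u²) − u² + α·log((u−1)²). Then for every α ∈ I, the derivative g'(α) equals log((u(α)−1)²). -/
/-- If `u(α)` is a differentiable branch of roots of `p(u) = u³ − u² − (α+1)u + 1`
avoiding `0` and `1` on an open interval, then `g(α) = f(u(α), α)`, where
`f(u,α) = log(u²) − u² + α·log((u−1)²)`, satisfies `g'(α) = log((u(α)−1)²)`. -/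
theorem stmt_11 (a b : ℝ) (u : ℝ → ℝ)
    (hdiff : ∀ α ∈ Set.Ioo a b, DifferentiableAt ℝ u α)
    (hne : ∀ α ∈ Set.Ioo a b, u α ≠ 0 ∧ u α ≠ 1)
    (hroot : ∀ α ∈ Set.Ioo a b, (u α) ^ 3 - (u α) ^ 2 - (α + 1) * u α + 1 = 0) :
    ∀ α ∈ Set.Ioo a b,
      HasDerivAt (fun β : ℝ => Real.log ((u β) ^ 2) - (u β) ^ 2
          + β * Real.log ((u β - 1) ^ 2))
        (Real.log ((u α - 1) ^ 2)) α := by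
  intro α hα
  obtain ⟨h0, h1⟩ := hne α hα
  have hu : HasDerivAt u (deriv u α) α := (hdiff α hα).hasDerivAt
  set c := deriv u α with hc
  have hm1 : u α - 1 ≠ 0 := sub_ne_zero.mpr h1
  -- derivative of u^2
  have hsq : HasDerivAt (fun β => (u β) ^ 2) (2 * u α * c) α := by
    have := hu.fun_pow 2
    simpa [mul_comm, mul_assoc, mul_left_comm] using this
  have hsqne : (u α) ^ 2 ≠ 0 := pow_ne_zero _ h0
  have hlog1 : HasDerivAt (fun β => Real.log ((u β) ^ 2))
      ((2 * u α * c) / (u α) ^ 2) α := hsq.log hsqne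
  -- derivative of (u-1)^2
  have hsub : HasDerivAt (fun β => u β - 1) c α := hu.sub_const 1
  have hsq2 : HasDerivAt (fun β => (u β - 1) ^ 2) (2 * (u α - 1) * c) α := by
    have := hsub.fun_pow 2
    simpa [mul_comm, mul_assoc, mul_left_comm] using this
  have hsq2ne : (u α - 1) ^ 2 ≠ 0 := pow_ne_zero _ hm1
  have hlog2 : HasDerivAt (fun β => Real.log ((u β - 1) ^ 2))
      ((2 * (u α - 1) * c) / (u α - 1) ^ 2) α := hsq2.log hsq2ne
  have hid : HasDerivAt (fun β : ℝ => β) 1 α := hasDerivAt_id α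
  have hmul : HasDerivAt (fun β : ℝ => β * Real.log ((u β - 1) ^ 2))
      (1 * Real.log ((u α - 1) ^ 2) + α * ((2 * (u α - 1) * c) / (u α - 1) ^ 2)) α :=
    hid.mul hlog2
  have htotal := (hlog1.sub hsq).add hmul
  have hr := hroot α hα
  have key : (2 * u α * c) / (u α) ^ 2 - 2 * u α * c
      + α * ((2 * (u α - 1) * c) / (u α - 1) ^ 2) = 0 := by
    field_simp
    linear_combination (-2 * c) * hr
  refine htotal.congr_deriv ?_
  linarith [key]
end

section
/- Let I ⊆ (0,∞) be an open interval and let u: I → ℝ be a differentiable function such that for every α ∈ I, u(α) < 0 and u(α)³ − u(α)² − (α+1)·u(α) + 1 = 0. Then the function g(α) = f(u(α), α), where f(u,α) = log(u²) − u² + α·log((u−1)²), is strictly monotonically increasing on I. -/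
/-- For a differentiable branch `u(α) < 0` of roots of `p(u) = u³ − u² − (α+1)u + 1`
on an open interval `I ⊆ (0,∞)`, the function `g(α) = f(u(α), α)` with
`f(u,α) = log(u²) − u² + α·log((u−1)²)` is strictly increasing. -/
theorem stmt_12 (a b : ℝ) (ha : 0 ≤ a) (u : ℝ → ℝ)
    (hdiff : ∀ α ∈ Set.Ioo a b, DifferentiableAt ℝ u α)
    (hneg : ∀ α ∈ Set.Ioo a b, u α < 0)
    (hroot : ∀ α ∈ Set.Ioo a b, (u α) ^ 3 - (u α) ^ 2 - (α + 1) * u α + 1 = 0) :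
    StrictMonoOn (fun α : ℝ => Real.log ((u α) ^ 2) - (u α) ^ 2
      + α * Real.log ((u α - 1) ^ 2)) (Set.Ioo a b) := by
  have key : ∀ α ∈ Set.Ioo a b,
      HasDerivAt (fun α : ℝ => Real.log ((u α) ^ 2) - (u α) ^ 2
        + α * Real.log ((u α - 1) ^ 2)) (Real.log ((u α - 1) ^ 2)) α := by
    intro α hα
    have hu := hneg α hα
    have hr := hroot α hα
    have hu0 : u α ≠ 0 := ne_of_lt hu
    have hu1 : u α - 1 ≠ 0 := by nlinarith
    have hd := (hdiff α hα).hasDerivAt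
    set d := deriv u α with hdd
    have hsq : HasDerivAt (fun α => (u α) ^ 2) (2 * u α * d) α := by
      have := hd.fun_pow 2
      simpa [mul_comm, mul_assoc, mul_left_comm] using this
    have h1 : HasDerivAt (fun α => Real.log ((u α) ^ 2)) ((2 * u α * d) / (u α) ^ 2) α :=
      hsq.log (pow_ne_zero 2 hu0)
    have hsub : HasDerivAt (fun α => u α - 1) d α := hd.sub_const 1
    have hsq1 : HasDerivAt (fun α => (u α - 1) ^ 2) (2 * (u α - 1) * d) α := by
      have := hsub.fun_pow 2
      simpa [mul_comm, mul_assoc, mul_left_comm] using this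
    have h2 : HasDerivAt (fun α => Real.log ((u α - 1) ^ 2))
        ((2 * (u α - 1) * d) / (u α - 1) ^ 2) α := hsq1.log (pow_ne_zero 2 hu1)
    have h3 : HasDerivAt (fun α : ℝ => α * Real.log ((u α - 1) ^ 2))
        (1 * Real.log ((u α - 1) ^ 2) + α * ((2 * (u α - 1) * d) / (u α - 1) ^ 2)) α :=
      (hasDerivAt_id α).mul h2
    have H := (h1.fun_sub hsq).fun_add h3
    refine H.congr_deriv ?_
    have hcancel : 2 * u α * d / (u α) ^ 2 - 2 * u α * d
        + α * (2 * (u α - 1) * d / (u α - 1) ^ 2) = 0 := by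
      field_simp
      linear_combination -2 * d * hr
    linarith [hcancel]
  intro x hx y hy hxy
  have hmono : StrictMonoOn (fun α : ℝ => Real.log ((u α) ^ 2) - (u α) ^ 2
      + α * Real.log ((u α - 1) ^ 2)) (Set.Ioo a b) := by
    apply strictMonoOn_of_deriv_pos (convex_Ioo a b)
    · intro z hz
      exact ((key z hz).differentiableAt.continuousAt).continuousWithinAt
    · intro z hz
      rw [interior_Ioo] at hz
      rw [(key z hz).deriv]
      apply Real.log_pos
      have := hneg z hz
      nlinarith
  exact hmono hx hy hxy
end

section
/- Let I ⊆ (0,∞) be an open interval and let u: I → ℝ be a differentiable function such that for every α ∈ I, 0 < u(α) < 1 and u(α)³ − u(α)² − (α+1)·u(α) + 1 = 0. Then the function g(α) = f(u(α), α), where f(u,α) = log(u²) − u² + α·log((u−1)²), is strictly monotonically decreasing on I. -/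
/-- For a differentiable branch `0 < u(α) < 1` of roots of `p(u) = u³ − u² − (α+1)u + 1`
on an open interval `I ⊆ (0,∞)`, the function `g(α) = f(u(α), α)` with
`f(u,α) = log(u²) − u² + α·log((u−1)²)` is strictly decreasing. -/
theorem stmt_13 (a b : ℝ) (ha : 0 ≤ a) (u : ℝ → ℝ)
    (hdiff : ∀ α ∈ Set.Ioo a b, DifferentiableAt ℝ u α)
    (hmem : ∀ α ∈ Set.Ioo a b, 0 < u α ∧ u α < 1)
    (hroot : ∀ α ∈ Set.Ioo a b, (u α) ^ 3 - (u α) ^ 2 - (α + 1) * u α + 1 = 0) :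
    StrictAntiOn (fun α : ℝ => Real.log ((u α) ^ 2) - (u α) ^ 2
      + α * Real.log ((u α - 1) ^ 2)) (Set.Ioo a b) := by
  have hderiv : ∀ α ∈ Set.Ioo a b,
      HasDerivAt (fun α : ℝ => Real.log ((u α) ^ 2) - (u α) ^ 2
        + α * Real.log ((u α - 1) ^ 2)) (Real.log ((u α - 1) ^ 2)) α := by
    intro α hα
    obtain ⟨hu0, hu1⟩ := hmem α hα
    have hune : u α ≠ 0 := ne_of_gt hu0
    have hune1 : u α - 1 ≠ 0 := by linarith
    have hu : HasDerivAt u (deriv u α) α := (hdiff α hα).hasDerivAt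
    set d := deriv u α with hd
    have h1 : HasDerivAt (fun x => (u x) ^ 2) ((2 : ℝ) * u α ^ 1 * d) α := hu.pow 2
    have h2 := h1.log (pow_ne_zero 2 hune)
    have h3 : HasDerivAt (fun x => u x - 1) d α := hu.sub_const 1
    have h4 : HasDerivAt (fun x => (u x - 1) ^ 2) ((2 : ℝ) * (u α - 1) ^ 1 * d) α := h3.pow 2
    have h5 := h4.log (pow_ne_zero 2 hune1)
    have h6 : HasDerivAt (fun x : ℝ => x) 1 α := hasDerivAt_id α
    have h7 := h6.mul h5
    have htot := (h2.sub h1).add h7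
    have hαu : α * u α = (u α) ^ 3 - (u α) ^ 2 - u α + 1 := by
      linear_combination -(hroot α hα)
    refine htot.congr_deriv ?_
    field_simp
    linear_combination (2 * d) * hαu
  have hcont : ContinuousOn (fun α : ℝ => Real.log ((u α) ^ 2) - (u α) ^ 2
      + α * Real.log ((u α - 1) ^ 2)) (Set.Ioo a b) := fun x hx =>
    ((hderiv x hx).differentiableAt.continuousAt).continuousWithinAt
  apply strictAntiOn_of_deriv_neg (convex_Ioo a b) hcont
  intro x hx
  rw [interior_Ioo] at hx
  rw [(hderiv x hx).deriv]
  obtain ⟨hu0, hu1⟩ := hmem x hx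
  have h1 : u x - 1 ≠ 0 := by linarith
  apply Real.log_neg
  · positivity
  · nlinarith
end

section
/- Let I ⊆ (0,∞) be an open interval and let u: I → ℝ be a differentiable function such that for every α ∈ I, u(α) > 1 and u(α)³ − u(α)² − (α+1)·u(α) + 1 = 0. Then the function g(α) = f(u(α), α), where f(u,α) = log(u²) − u² + α·log((u−1)²), is strictly monotonically decreasing on I ∩ (0, 3/2) and strictly monotonically increasing on I ∩ (3/2, ∞). -/
/-- For a differentiable branch `u(α) > 1` of roots of `p(u) = u³ − u² − (α+1)u + 1` on an
open interval `I ⊆ (0,∞)`, the function `g(α) = f(u(α), α)` with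
`f(u,α) = log(u²) − u² + α·log((u−1)²)` is strictly decreasing on `I ∩ (0, 3/2)` and
strictly increasing on `I ∩ (3/2, ∞)`. -/
theorem stmt_15 (a b : ℝ) (ha : 0 ≤ a) (u : ℝ → ℝ)
    (hdiff : ∀ α ∈ Set.Ioo a b, DifferentiableAt ℝ u α)
    (hgt : ∀ α ∈ Set.Ioo a b, 1 < u α)
    (hroot : ∀ α ∈ Set.Ioo a b, (u α) ^ 3 - (u α) ^ 2 - (α + 1) * u α + 1 = 0) :
    StrictAntiOn (fun α : ℝ => Real.log ((u α) ^ 2) - (u α) ^ 2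
      + α * Real.log ((u α - 1) ^ 2)) (Set.Ioo a b ∩ Set.Ioo 0 (3 / 2)) ∧
    StrictMonoOn (fun α : ℝ => Real.log ((u α) ^ 2) - (u α) ^ 2
      + α * Real.log ((u α - 1) ^ 2)) (Set.Ioo a b ∩ Set.Ioi (3 / 2)) := by
  set g : ℝ → ℝ := fun α : ℝ => Real.log ((u α) ^ 2) - (u α) ^ 2
      + α * Real.log ((u α - 1) ^ 2) with hg
  have key : ∀ α ∈ Set.Ioo a b, HasDerivAt g (Real.log ((u α - 1) ^ 2)) α := by
    intro α hα
    have hu1 : 1 < u α := hgt α hα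
    have hune : u α ≠ 0 := by linarith
    have hune1 : u α - 1 ≠ 0 := by linarith
    have hsq : (u α) ^ 2 ≠ 0 := pow_ne_zero _ hune
    have hsq1 : (u α - 1) ^ 2 ≠ 0 := pow_ne_zero _ hune1
    have hu' : HasDerivAt u (deriv u α) α := (hdiff α hα).hasDerivAt
    set d := deriv u α
    have h2 : HasDerivAt (fun x => (u x) ^ 2) (2 * (u α) ^ 1 * d) α := hu'.pow 2
    have h1 : HasDerivAt (fun x => Real.log ((u x) ^ 2))
        ((2 * (u α) ^ 1 * d) / (u α) ^ 2) α := h2.log hsq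
    have h3 : HasDerivAt (fun x => (u x - 1) ^ 2) (2 * (u α - 1) ^ 1 * d) α :=
      (hu'.sub_const 1).pow 2
    have h4 : HasDerivAt (fun x => Real.log ((u x - 1) ^ 2))
        ((2 * (u α - 1) ^ 1 * d) / (u α - 1) ^ 2) α := h3.log hsq1
    have h5 : HasDerivAt (fun x : ℝ => x * Real.log ((u x - 1) ^ 2))
        (1 * Real.log ((u α - 1) ^ 2)
          + α * ((2 * (u α - 1) ^ 1 * d) / (u α - 1) ^ 2)) α :=
      (hasDerivAt_id α).mul h4
    have htot := (h1.sub h2).add h5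
    have heq : (2 * (u α) ^ 1 * d) / (u α) ^ 2 - 2 * (u α) ^ 1 * d
        + (1 * Real.log ((u α - 1) ^ 2)
          + α * ((2 * (u α - 1) ^ 1 * d) / (u α - 1) ^ 2))
        = Real.log ((u α - 1) ^ 2) := by
      have hr := hroot α hα
      field_simp
      linear_combination (-2 * d) * hr
    rw [heq] at htot
    exact htot
  have hu2lt : ∀ α ∈ Set.Ioo a b, α < 3 / 2 → u α < 2 := by
    intro α hα h32
    have hu1 := hgt α hα
    have hr := hroot α hα
    nlinarith [sq_nonneg (u α - 2), sq_nonneg (u α + 1), hα.1, ha]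
  have hu2gt : ∀ α ∈ Set.Ioo a b, 3 / 2 < α → 2 < u α := by
    intro α hα h32
    have hu1 := hgt α hα
    have hr := hroot α hα
    nlinarith [sq_nonneg (u α - 2), sq_nonneg (u α + 1)]
  have hcont : ContinuousOn g (Set.Ioo a b) := fun α hα =>
    ((key α hα).differentiableAt.continuousAt).continuousWithinAt
  constructor
  · apply strictAntiOn_of_deriv_neg
      ((convex_Ioo a b).inter (convex_Ioo 0 (3 / 2)))
      (hcont.mono Set.inter_subset_left)
    intro α hα
    rw [interior_eq_iff_isOpen.mpr ((isOpen_Ioo).inter isOpen_Ioo)] at hα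
    obtain ⟨hα1, hα2⟩ := hα
    rw [(key α hα1).deriv]
    have h2 : u α < 2 := hu2lt α hα1 hα2.2
    have h1 : 1 < u α := hgt α hα1
    apply Real.log_neg
    · exact pow_pos (by linarith) 2
    · nlinarith
  · apply strictMonoOn_of_deriv_pos
      ((convex_Ioo a b).inter (convex_Ioi (3 / 2)))
      (hcont.mono Set.inter_subset_left)
    intro α hα
    rw [interior_eq_iff_isOpen.mpr ((isOpen_Ioo).inter isOpen_Ioi)] at hα
    obtain ⟨hα1, hα2⟩ := hα
    rw [(key α hα1).deriv]
    have h2 : 2 < u α := hu2gt α hα1 hα2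
    apply Real.log_pos
    nlinarith
end

section
/- Let α > 0 and let u₁ ∈ (−∞,0), u₂ ∈ (0,1), u₃ ∈ (1,∞) be the three real roots of the cubic polynomial p(u) = u³ − u² − (α+1)u + 1. Then f(u₁, α) > f(u₂, α) and f(u₁, α) > f(u₃, α), where f(u,α) = log(u²) − u² + α·log((u−1)²). In particular, among the three collinear fixed configurations, the one at u₁ has the strictly largest Hamiltonian value and is the unique center of the system; the other two are saddles. -/
set_option maxHeartbeats 1600000 in
/-- For `α > 0`, among the three real roots `u₁ ∈ (−∞,0)`, `u₂ ∈ (0,1)`, `u₃ ∈ (1,∞)`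
of `p(u) = u³ − u² − (α+1)u + 1`, the value of `f(u,α) = log(u²) − u² + α·log((u−1)²)`
is strictly largest at `u₁`: the equilibrium at `u₁` is the unique center. -/
theorem stmt_16 (α u₁ u₂ u₃ : ℝ) (hα : 0 < α)
    (h₁ : u₁ < 0) (h₂ : 0 < u₂ ∧ u₂ < 1) (h₃ : 1 < u₃)
    (hr₁ : u₁ ^ 3 - u₁ ^ 2 - (α + 1) * u₁ + 1 = 0)
    (hr₂ : u₂ ^ 3 - u₂ ^ 2 - (α + 1) * u₂ + 1 = 0)
    (hr₃ : u₃ ^ 3 - u₃ ^ 2 - (α + 1) * u₃ + 1 = 0) :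
    (Real.log (u₂ ^ 2) - u₂ ^ 2 + α * Real.log ((u₂ - 1) ^ 2)
      < Real.log (u₁ ^ 2) - u₁ ^ 2 + α * Real.log ((u₁ - 1) ^ 2)) ∧
    (Real.log (u₃ ^ 2) - u₃ ^ 2 + α * Real.log ((u₃ - 1) ^ 2)
      < Real.log (u₁ ^ 2) - u₁ ^ 2 + α * Real.log ((u₁ - 1) ^ 2)) := by
  obtain ⟨h2a, h2b⟩ := h₂
  -- u₁ < -1
  have h1b : u₁ < -1 := by
    by_contra hcon
    push_neg at hcon
    nlinarith [mul_nonneg (sq_nonneg (u₁ - 1)) (by linarith : (0:ℝ) ≤ u₁ + 1),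
      mul_pos hα (by linarith : (0:ℝ) < -u₁)]
  -- u₁² < α + 1
  have hq : u₁ ^ 2 < α + 1 := by nlinarith [hr₁]
  -- Vieta: sum of roots = 1
  have e12 : (u₁ - u₂) * (u₁^2 + u₁*u₂ + u₂^2 - u₁ - u₂ - (α+1)) = 0 := by
    linear_combination hr₁ - hr₂
  have e23 : (u₂ - u₃) * (u₂^2 + u₂*u₃ + u₃^2 - u₂ - u₃ - (α+1)) = 0 := by
    linear_combination hr₂ - hr₃
  have f12 : u₁^2 + u₁*u₂ + u₂^2 - u₁ - u₂ - (α+1) = 0 := by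
    rcases mul_eq_zero.mp e12 with h | h
    · exfalso; nlinarith
    · exact h
  have f23 : u₂^2 + u₂*u₃ + u₃^2 - u₂ - u₃ - (α+1) = 0 := by
    rcases mul_eq_zero.mp e23 with h | h
    · exfalso; nlinarith
    · exact h
  have hsum : u₁ + u₂ + u₃ = 1 := by
    have e : (u₁ - u₃) * (u₁ + u₂ + u₃ - 1) = 0 := by linear_combination f12 - f23
    rcases mul_eq_zero.mp e with h | h
    · exfalso; nlinarith
    · linarith
  have hlog2 : (0.6931471803:ℝ) < Real.log 2 := Real.log_two_gt_d9
  constructor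
  · -- Goal 1
    have L1 : (0:ℝ) ≤ Real.log (u₁ ^ 2) := Real.log_nonneg (by nlinarith)
    have L2 : 2 * Real.log 2 ≤ Real.log ((u₁ - 1) ^ 2) := by
      have h4 : (4:ℝ) ≤ (u₁ - 1) ^ 2 := by nlinarith
      have := Real.log_le_log (by norm_num : (0:ℝ) < 4) h4
      have h42 : Real.log 4 = 2 * Real.log 2 := by
        rw [show (4:ℝ) = 2 ^ 2 by norm_num, Real.log_pow]; push_cast; ring
      linarith
    have L3 : Real.log (u₂ ^ 2) ≤ 2 * (u₂ - 1) := by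
      have := Real.log_le_sub_one_of_pos h2a
      calc Real.log (u₂ ^ 2) = 2 * Real.log u₂ := by
            rw [Real.log_pow]; push_cast; ring
        _ ≤ 2 * (u₂ - 1) := by linarith
    have L4 : Real.log ((u₂ - 1) ^ 2) ≤ -2 * u₂ := by
      have hp : (0:ℝ) < 1 - u₂ := by linarith
      have := Real.log_le_sub_one_of_pos hp
      have heq : (u₂ - 1) ^ 2 = (1 - u₂) ^ 2 := by ring
      calc Real.log ((u₂ - 1) ^ 2) = 2 * Real.log (1 - u₂) := by
            rw [heq, Real.log_pow]; push_cast; ring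
        _ ≤ -2 * u₂ := by linarith
    nlinarith [mul_le_mul_of_nonneg_left L4 hα.le, mul_le_mul_of_nonneg_left L2 hα.le,
      sq_nonneg (1 - u₂), mul_pos hα h2a]
  · -- Goal 2
    have hwt : -u₁ < u₃ := by linarith
    have hwu : u₃ < 1 - u₁ := by linarith
    have hu1sq : (1:ℝ) < u₁ ^ 2 := by nlinarith
    have hu3sq : u₁ ^ 2 < u₃ ^ 2 := by nlinarith
    -- log(u₁²) - log(u₃²) ≥ 1 - u₃²/u₁²
    have hd : Real.log (u₃ ^ 2) - Real.log (u₁ ^ 2) ≤ u₃ ^ 2 / u₁ ^ 2 - 1 := by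
      have hpos1 : (0:ℝ) < u₁ ^ 2 := by positivity
      have hpos3 : (0:ℝ) < u₃ ^ 2 := by positivity
      have := Real.log_le_sub_one_of_pos (div_pos hpos3 hpos1)
      rwa [Real.log_div (ne_of_gt hpos3) (ne_of_gt hpos1)] at this
    have hdd : u₃ ^ 2 / u₁ ^ 2 - 1 ≤ u₃ ^ 2 - u₁ ^ 2 := by
      have hpos1 : (0:ℝ) < u₁ ^ 2 := by positivity
      rw [sub_le_iff_le_add, div_le_iff₀ hpos1]
      have key : 0 ≤ (u₃ ^ 2 - u₁ ^ 2) * (u₁ ^ 2 - 1) :=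
        mul_nonneg (by linarith) (by linarith)
      nlinarith [key]
    have hB : Real.log ((u₃ - 1) ^ 2) < Real.log ((u₁ - 1) ^ 2) := by
      apply Real.log_lt_log (pow_pos (by linarith : (0:ℝ) < u₃ - 1) 2)
      nlinarith
    have hB' : α * Real.log ((u₃ - 1) ^ 2) < α * Real.log ((u₁ - 1) ^ 2) :=
      mul_lt_mul_of_pos_left hB hα
    linarith
end
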